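/- arXiv:1503.06506 — 5 statements merged into one kernel-verified Lean document; each statement's English description precedes it below -/
import Mathlib

section
/- The map ρ_1 : 𝓕^{2N−3} → 𝓕^{2N−5}, (f_12, f_13, f_23, h) ↦ (f_23 + g_23, h), where g_23 is the case-1 virtual interaction induced by f_12 and f_13, is an open map: it sends open subsets of 𝓕^{2N−3} to open subsets of 𝓕^{2N−5}. -/
open Set Filter Topology MeasureTheory Matrix Function

attribute [local instance] Classical.propDecidable

noncomputable section

/-- `f̃(d) = d * f(d)`. -/
def tildeFn (f : ℝ → ℝ) : ℝ → ℝ := fun d => d * f d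

/-- Membership in the class `𝓕` of monotone interaction laws:
`f` is `C¹` on `ℝ₊ = (0,∞)`, `f̃′ > 0` on `ℝ₊`, `f̃` has a zero, and
`∫_d^1 f̃(x) dx → −∞` as `d → 0⁺`. -/
def MemF (f : ℝ → ℝ) : Prop :=
  ContDiffOn ℝ 1 f (Set.Ioi 0) ∧
  (∀ d > (0:ℝ), 0 < deriv (tildeFn f) d) ∧
  (∃ d > (0:ℝ), tildeFn f d = 0) ∧
  Tendsto (fun d => ∫ x in d..(1:ℝ), tildeFn f x) (𝓝[>] (0:ℝ)) atBot

/-- The space `C¹(ℝ₊, ℝ)`. -/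
def C1Pos : Type := {f : ℝ → ℝ // ContDiffOn ℝ 1 f (Set.Ioi 0)}

/-- The Whitney `C¹`-topology on `C¹(ℝ₊, ℝ)`, generated by the basic open sets
`B_δ(f) = {g : |g(d) − f(d)| + |g′(d) − f′(d)| < δ(d) for all d > 0}`. -/
instance : TopologicalSpace C1Pos :=
  TopologicalSpace.generateFrom
    { S | ∃ (f : C1Pos) (δ : ℝ → ℝ), ContinuousOn δ (Set.Ioi 0) ∧ (∀ d > (0:ℝ), 0 < δ d) ∧
        S = { g : C1Pos | ∀ d > (0:ℝ), |g.1 d - f.1 d| + |deriv g.1 d - deriv f.1 d| < δ d } }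

/-- The class `𝓕` as a topological space (subspace of `C¹(ℝ₊,ℝ)`). -/
def FF : Type := {f : C1Pos // MemF f.1}

instance : TopologicalSpace FF := instTopologicalSpaceSubtype

/-- `G` is a triangulated Laman graph: there is a Henneberg-type construction order
(a relabeling `σ`) starting from the edge between the first two vertices, in which every
later vertex is joined to exactly two earlier, adjacent, vertices. -/
def IsTLG {N : ℕ} (G : SimpleGraph (Fin N)) : Prop :=
  2 ≤ N ∧
  ∃ (σ : Equiv.Perm (Fin N)) (par₁ par₂ : Fin N → Fin N),
    (∀ k : Fin N, 2 ≤ (k : ℕ) →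
      ((par₁ k : ℕ) < (k : ℕ) ∧ (par₂ k : ℕ) < (k : ℕ) ∧ par₁ k ≠ par₂ k ∧
        G.Adj (σ (par₁ k)) (σ (par₂ k)))) ∧
    (∀ i j : Fin N, G.Adj (σ i) (σ j) ↔
      (((i : ℕ) = 0 ∧ (j : ℕ) = 1) ∨ ((i : ℕ) = 1 ∧ (j : ℕ) = 0) ∨
       (2 ≤ (i : ℕ) ∧ (j = par₁ i ∨ j = par₂ i)) ∨
       (2 ≤ (j : ℕ) ∧ (i = par₁ j ∨ i = par₂ j))))

/-- Euclidean distance on `ℝ²` (coordinates `(a,b)`). -/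
def dist2 (x y : ℝ × ℝ) : ℝ := Real.sqrt ((x.1 - y.1)^2 + (x.2 - y.2)^2)

/-- `p` belongs to the configuration space `P`: no collision of adjacent agents. -/
def InConfigSpace {N : ℕ} (G : SimpleGraph (Fin N)) (p : Fin N → ℝ × ℝ) : Prop :=
  ∀ i j, G.Adj i j → p i ≠ p j

/-- `p` is an equilibrium of the RMA system `ẋᵢ = Σ_{j : (i,j) ∈ E} f_ij(d_ij)(x_j − x_i)`. -/
def IsEquilibrium {N : ℕ} (G : SimpleGraph (Fin N)) (f : Fin N → Fin N → ℝ → ℝ)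
    (p : Fin N → ℝ × ℝ) : Prop :=
  ∀ i, (∑ j, if G.Adj i j then (f i j (dist2 (p i) (p j))) • (p j - p i) else (0:ℝ×ℝ)) = 0

/-- The potential function `Φ(p) = Σ_{(i,j) ∈ E} ∫_1^{d_ij} x f_ij(x) dx`
(each edge counted once; the factor 1/2 compensates the double count over ordered pairs). -/
def potential {N : ℕ} (G : SimpleGraph (Fin N)) (f : Fin N → Fin N → ℝ → ℝ)
    (p : Fin N → ℝ × ℝ) : ℝ :=
  (1/2) * ∑ i, ∑ j, if G.Adj i j then ∫ x in (1:ℝ)..(dist2 (p i) (p j)), x * f i j x else 0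

/-- Coordinate directions on the configuration space, in the order `(a₁,…,a_N,b₁,…,b_N)`. -/
def basisVec {N : ℕ} : (Fin N ⊕ Fin N) → (Fin N → ℝ × ℝ) :=
  Sum.elim (fun i => Pi.single i ((1:ℝ), (0:ℝ))) (fun i => Pi.single i ((0:ℝ), (1:ℝ)))

/-- The Hessian matrix of `Φ` at `p` in the coordinates `(a₁,…,a_N,b₁,…,b_N)`. -/
def hessian {N : ℕ} (Φ : (Fin N → ℝ × ℝ) → ℝ) (p : Fin N → ℝ × ℝ) :
    Matrix (Fin N ⊕ Fin N) (Fin N ⊕ Fin N) ℝ :=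
  Matrix.of fun u v => fderiv ℝ (fun q => fderiv ℝ Φ q (basisVec v)) p (basisVec u)

/-- The inertia `𝐧(M) = (n₊(M), n₀(M), n₋(M))` of a real symmetric matrix: the numbers of
positive, zero, and negative eigenvalues (counted with multiplicity). -/
def inertia {m : Type*} [Fintype m] [DecidableEq m] (M : Matrix m m ℝ) : ℕ × ℕ × ℕ :=
  if h : M.IsHermitian then
    ((Finset.univ.filter fun i => 0 < h.eigenvalues i).card,
     (Finset.univ.filter fun i => h.eigenvalues i = 0).card,
     (Finset.univ.filter fun i => h.eigenvalues i < 0).card)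
  else (0, 0, 0)

/-- The number `n₀(M)` of zero eigenvalues of a real symmetric matrix. -/
def n0 {m : Type*} [Fintype m] [DecidableEq m] (M : Matrix m m ℝ) : ℕ := (inertia M).2.1

/-- The vector-valued sign function. -/
def sgn3 (x : ℝ) : ℕ × ℕ × ℕ :=
  if 0 < x then (1,0,0) else if x = 0 then (0,1,0) else (0,0,1)

/-- `q` lies in the `SE(2)`-orbit of `p` (rigid motions: rotation by `(c,s)` with
`c² + s² = 1` followed by translation by `(vx,vy)`). -/
def sameOrbit {N : ℕ} (p q : Fin N → ℝ × ℝ) : Prop :=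
  ∃ c s vx vy : ℝ, c^2 + s^2 = 1 ∧
    ∀ i, q i = (c * (p i).1 - s * (p i).2 + vx, s * (p i).1 + c * (p i).2 + vy)

/-- The interaction laws determined by an ensemble `ω ∈ 𝓕^{|E|}`. -/
def ensembleLaws {N : ℕ} {G : SimpleGraph (Fin N)} (ω : G.edgeSet → FF) :
    Fin N → Fin N → ℝ → ℝ :=
  fun i j => if h : G.Adj i j then (ω ⟨s(i,j), G.mem_edgeSet.mpr h⟩).1.1 else 0

/-- The line configuration on the `a`-axis with coordinates `a`. -/
def lineConfig {N : ℕ} (a : Fin N → ℝ) : Fin N → ℝ × ℝ := fun i => (a i, 0)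

/-- The matrix `F_p` of a line configuration with coordinates `a`: symmetric, zero row sums,
off-diagonal entries `φ_ij(d_ij)` on edges and `0` otherwise. -/
def FMat {N : ℕ} (G : SimpleGraph (Fin N)) (φ : Fin N → Fin N → ℝ → ℝ)
    (a : Fin N → ℝ) : Matrix (Fin N) (Fin N) ℝ :=
  Matrix.of fun i j =>
    if i = j then -∑ k, (if G.Adj i k then φ i k |a i - a k| else 0)
    else if G.Adj i j then φ i j |a i - a j| else 0

/-- The matrix `d̃F_p`: off-diagonal entries `f̃′_ij(d_ij)` on edges. -/
def dFMat {N : ℕ} (G : SimpleGraph (Fin N)) (f : Fin N → Fin N → ℝ → ℝ)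
    (a : Fin N → ℝ) : Matrix (Fin N) (Fin N) ℝ :=
  FMat G (fun i j d => deriv (tildeFn (f i j)) d) a

/-- Case 1 balanced distance: the (generically unique) `d₁₂(d)` with `0 < d₁₂ < d` and
`f̃₁₂(d₁₂) = f̃₁₃(d − d₁₂)`. -/
def case1d12 (f12 f13 : ℝ → ℝ) (d : ℝ) : ℝ :=
  Classical.epsilon fun t => 0 < t ∧ t < d ∧ tildeFn f12 t = tildeFn f13 (d - t)

/-- The case-1 virtual interaction: `g̃₂₃(d) = f̃₁₂(d₁₂(d))`. -/
def g23Case1 (f12 f13 : ℝ → ℝ) : ℝ → ℝ :=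
  fun d => tildeFn f12 (case1d12 f12 f13 d) / d

/-- Case 2 balanced distance: the (generically unique) `d₁₂(d) > 0` with
`f̃₁₂(d₁₂) + f̃₁₃(d₁₂ + d) = 0`. -/
def case2d12 (f12 f13 : ℝ → ℝ) (d : ℝ) : ℝ :=
  Classical.epsilon fun t => 0 < t ∧ tildeFn f12 t + tildeFn f13 (t + d) = 0

/-- The case-2 virtual interaction: `g̃₂₃(d) = f̃₁₃(d₁₃(d))`, `d₁₃(d) = d₁₂(d) + d`. -/
def g23Case2 (f12 f13 : ℝ → ℝ) : ℝ → ℝ :=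
  fun d => tildeFn f13 (case2d12 f12 f13 d + d) / d

/-- The case-3 virtual interaction: case 2 with the roles of agents 2,3 (and `f₁₂`,`f₁₃`)
interchanged. -/
def g23Case3 (f12 f13 : ℝ → ℝ) : ℝ → ℝ := g23Case2 f13 f12

/-- The virtual interaction between agents 2 and 3 induced by `f₁₂`, `f₁₃`, chosen according
to which of the three aligned agents (at coordinates `a1`, `a2`, `a3`) lies between the
other two. -/
def virtualG (f12 f13 : ℝ → ℝ) (a1 a2 a3 : ℝ) : ℝ → ℝ :=
  if (a2 < a1 ∧ a1 < a3) ∨ (a3 < a1 ∧ a1 < a2) then g23Case1 f12 f13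
  else if (a1 < a2 ∧ a2 < a3) ∨ (a3 < a2 ∧ a2 < a1) then g23Case2 f12 f13
  else g23Case3 f12 f13

/-- The interaction laws of the reduced system: vertex `0` (the last Henneberg vertex,
the paper's vertex 1) is deleted, reduced vertex `i` is original vertex `i+1`, and the law on
the reduced edge `(0,1)` (the paper's edge `(2,3)`) is `f*₂₃ = f₂₃ + g₂₃`. -/
def reducedLaws {n : ℕ} (f : Fin (n+3) → Fin (n+3) → ℝ → ℝ) (g : ℝ → ℝ) :
    Fin (n+2) → Fin (n+2) → ℝ → ℝ :=
  fun i j => if (i = 0 ∧ j = 1) ∨ (i = 1 ∧ j = 0)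
    then fun d => f i.succ j.succ d + g d
    else f i.succ j.succ

end

noncomputable section Aux


lemma diffAt_of_c1 {w : ℝ → ℝ} (hw : ContDiffOn ℝ 1 w (Set.Ioi 0)) {d : ℝ} (hd : 0 < d) :
    DifferentiableAt ℝ w d :=
  (hw.differentiableOn one_ne_zero).differentiableAt (isOpen_Ioi.mem_nhds hd)

lemma deriv_tilde {w : ℝ → ℝ} (hw : ContDiffOn ℝ 1 w (Set.Ioi 0)) {d : ℝ} (hd : 0 < d) :
    deriv (tildeFn w) d = w d + d * deriv w d := by
  have h1 : HasDerivAt (fun x => x * w x) (1 * w d + d * deriv w d) d :=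
    (hasDerivAt_id' (x := d)).mul (diffAt_of_c1 hw hd).hasDerivAt
  have := h1.deriv
  rw [show tildeFn w = fun x => x * w x from rfl]
  simpa using this

lemma isOpen_ball (f : C1Pos) (δ : ℝ → ℝ) (hc : ContinuousOn δ (Set.Ioi 0))
    (hp : ∀ d > (0:ℝ), 0 < δ d) :
    IsOpen {g : C1Pos | ∀ d > (0:ℝ), |g.1 d - f.1 d| + |deriv g.1 d - deriv f.1 d| < δ d} :=
  TopologicalSpace.isOpen_generateFrom_of_mem ⟨f, δ, hc, hp, rfl⟩

def subMap (g : ℝ → ℝ) (hg : ContDiffOn ℝ 1 g (Set.Ioi 0)) : C1Pos → C1Pos :=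
  fun u => ⟨fun d => u.1 d - g d, u.2.sub hg⟩

def addC1 (f : C1Pos) (g : ℝ → ℝ) (hg : ContDiffOn ℝ 1 g (Set.Ioi 0)) : C1Pos :=
  ⟨fun x => f.1 x + g x, f.2.add hg⟩

lemma continuous_subC1 (g : ℝ → ℝ) (hg : ContDiffOn ℝ 1 g (Set.Ioi 0)) :
    Continuous (subMap g hg) := by
  apply continuous_generateFrom_iff.mpr
  rintro S ⟨f, δ, hδc, hδp, rfl⟩
  have hset : (subMap g hg) ⁻¹'
      {v : C1Pos | ∀ d > (0:ℝ), |v.1 d - f.1 d| + |deriv v.1 d - deriv f.1 d| < δ d}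
      = {w : C1Pos | ∀ d > (0:ℝ),
          |w.1 d - (addC1 f g hg).1 d| +
          |deriv w.1 d - deriv (addC1 f g hg).1 d| < δ d} := by
    ext w
    simp only [Set.mem_preimage, Set.mem_setOf_eq]
    refine forall₂_congr fun d hd => ?_
    have h1 : deriv (fun x => w.1 x - g x) d = deriv w.1 d - deriv g d :=
      deriv_sub (diffAt_of_c1 w.2 hd) (diffAt_of_c1 hg hd)
    have h2 : deriv (fun x => f.1 x + g x) d = deriv f.1 d + deriv g d :=
      deriv_add (diffAt_of_c1 f.2 hd) (diffAt_of_c1 hg hd)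
    show (|w.1 d - g d - f.1 d| + |deriv (fun x => w.1 x - g x) d - deriv f.1 d| < δ d) ↔ _
    rw [show (addC1 f g hg).1 = fun x => f.1 x + g x from rfl]
    simp only [h1, h2]
    rw [show (w.1 d - g d) - f.1 d = w.1 d - (f.1 d + g d) by ring,
      show (deriv w.1 d - deriv g d) - deriv f.1 d = deriv w.1 d - (deriv f.1 d + deriv g d) by ring]
  rw [hset]
  exact isOpen_ball _ δ hδc hδp


lemma isOpen_memF : IsOpen {u : C1Pos | MemF u.1} := by
  rw [isOpen_iff_forall_mem_open]
  rintro u ⟨hu1, hu2, ⟨d0, hd0, hz⟩, hu4⟩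
  have contu : ContinuousOn u.1 (Set.Ioi 0) := hu1.continuousOn
  have contu' : ContinuousOn (deriv u.1) (Set.Ioi 0) :=
    hu1.continuousOn_deriv_of_isOpen isOpen_Ioi le_rfl
  have tcont : ContinuousOn (tildeFn u.1) (Set.Ioi 0) := by
    have : ContinuousOn (fun d => d * u.1 d) (Set.Ioi 0) := continuousOn_id.mul contu
    exact this
  have smono : StrictMonoOn (tildeFn u.1) (Set.Ioi 0) := by
    refine strictMonoOn_of_deriv_pos (convex_Ioi 0) tcont ?_
    intro x hx
    rw [interior_Ioi] at hx
    exact hu2 x hx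
  have hd0h : (0:ℝ) < d0/2 := by linarith
  have hd02 : (0:ℝ) < 2*d0 := by linarith
  have cneg : tildeFn u.1 (d0/2) < 0 := by
    have := smono (Set.mem_Ioi.mpr hd0h) (Set.mem_Ioi.mpr hd0) (by linarith)
    linarith [this, hz.le, hz.ge]
  have cpos : 0 < tildeFn u.1 (2*d0) := by
    have := smono (Set.mem_Ioi.mpr hd0) (Set.mem_Ioi.mpr hd02) (by linarith)
    linarith
  set c' : ℝ := -(tildeFn u.1 (d0/2)) with hc'
  set c : ℝ := tildeFn u.1 (2*d0) with hc
  have hc'pos : 0 < c' := by simp [hc']; linarith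
  have hcpos : 0 < c := cpos
  set m : ℝ := min (c/(4*d0)) (c'/d0) with hm
  have hmpos : 0 < m := lt_min (by positivity) (by positivity)
  set D : ℝ → ℝ := fun d => u.1 d + d * deriv u.1 d with hD
  have hDpos : ∀ d > (0:ℝ), 0 < D d := by
    intro d hd
    rw [hD]; simp only
    rw [← deriv_tilde hu1 hd]
    exact hu2 d hd
  set δ : ℝ → ℝ := fun d => min (min (D d / (2*(1+d))) m) d⁻¹ with hδ
  have hδc : ContinuousOn δ (Set.Ioi 0) := by
    have hDc : ContinuousOn D (Set.Ioi 0) := contu.add (continuousOn_id.mul contu')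
    have h1 : ContinuousOn (fun d => D d / (2*(1+d))) (Set.Ioi 0) :=
      hDc.div (by fun_prop) (fun d hd => by have : (0:ℝ) < d := hd; positivity)
    have h2 : ContinuousOn (fun d : ℝ => d⁻¹) (Set.Ioi 0) :=
      continuousOn_id.inv₀ (fun d hd => ne_of_gt hd)
    exact fun x hx => ((h1 x hx).min (continuousOn_const x hx)).min (h2 x hx)
  have hδp : ∀ d > (0:ℝ), 0 < δ d := by
    intro d hd
    refine lt_min (lt_min ?_ hmpos) (by positivity)
    have := hDpos d hd
    positivity
  refine ⟨{g : C1Pos | ∀ d > (0:ℝ), |g.1 d - u.1 d| + |deriv g.1 d - deriv u.1 d| < δ d},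
    ?_, isOpen_ball u δ hδc hδp, ?_⟩
  · -- subset of MemF set
    intro v hv
    have hδa : ∀ d > (0:ℝ), δ d ≤ D d / (2*(1+d)) := fun d _ => (min_le_left _ _).trans (min_le_left _ _)
    have hδm : ∀ d > (0:ℝ), δ d ≤ m := fun d _ => (min_le_left _ _).trans (min_le_right _ _)
    have hδi : ∀ d > (0:ℝ), δ d ≤ d⁻¹ := fun d _ => min_le_right _ _
    have tdiff : ∀ x : ℝ, tildeFn v.1 x - tildeFn u.1 x = x * (v.1 x - u.1 x) := by
      intro x; simp [tildeFn]; ring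
    refine ⟨v.2, ?_, ?_, ?_⟩
    · -- deriv tilde pos
      intro d hd
      have h1 := hv d hd
      have hδa' := hδa d hd
      have hkey : δ d * (2*(1+d)) ≤ D d := by
        rw [div_eq_mul_inv] at hδa'
        have h2 : (0:ℝ) < 2*(1+d) := by linarith
        calc δ d * (2*(1+d)) ≤ (D d * (2*(1+d))⁻¹) * (2*(1+d)) := by nlinarith
          _ = D d := by field_simp
      rw [deriv_tilde v.2 hd]
      have hu' := deriv_tilde hu1 hd
      have hDd := hDpos d hd
      set A := v.1 d; set B := deriv v.1 d; set C := u.1 d; set E := deriv u.1 d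
      have hA : -(|A - C|) ≤ A - C := neg_abs_le _
      have hB : -(|B - E|) ≤ B - E := neg_abs_le _
      have hAn : (0:ℝ) ≤ |A - C| := abs_nonneg _
      have hBn : (0:ℝ) ≤ |B - E| := abs_nonneg _
      have hDval : D d = C + d * E := rfl
      nlinarith [h1, hkey, hd]
    · -- zero exists
      have hva : tildeFn v.1 (d0/2) < 0 := by
        have h1 := hv (d0/2) hd0h
        have h2 : δ (d0/2) ≤ c'/d0 := (hδm _ hd0h).trans (min_le_right _ _)
        have h3 : |tildeFn v.1 (d0/2) - tildeFn u.1 (d0/2)| = (d0/2) * |v.1 (d0/2) - u.1 (d0/2)| := by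
          rw [tdiff, abs_mul, abs_of_pos hd0h]
        have h4 := abs_nonneg (deriv v.1 (d0/2) - deriv u.1 (d0/2))
        have h5 : tildeFn v.1 (d0/2) - tildeFn u.1 (d0/2) ≤ |tildeFn v.1 (d0/2) - tildeFn u.1 (d0/2)| := le_abs_self _
        have h6 : |v.1 (d0/2) - u.1 (d0/2)| < c'/d0 := by linarith
        have h7 := mul_lt_mul_of_pos_left h6 hd0h
        have h8 : (d0/2) * (c'/d0) = c'/2 := by field_simp
        have h9 : c' = -(tildeFn u.1 (d0/2)) := hc'
        linarith
      have hvb : 0 < tildeFn v.1 (2*d0) := by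
        have h1 := hv (2*d0) hd02
        have h2 : δ (2*d0) ≤ c/(4*d0) := (hδm _ hd02).trans (min_le_left _ _)
        have h3 : |tildeFn v.1 (2*d0) - tildeFn u.1 (2*d0)| = (2*d0) * |v.1 (2*d0) - u.1 (2*d0)| := by
          rw [tdiff, abs_mul, abs_of_pos hd02]
        have h4 := abs_nonneg (deriv v.1 (2*d0) - deriv u.1 (2*d0))
        have h5 : -(|tildeFn v.1 (2*d0) - tildeFn u.1 (2*d0)|) ≤ tildeFn v.1 (2*d0) - tildeFn u.1 (2*d0) := neg_abs_le _
        have h6 : |v.1 (2*d0) - u.1 (2*d0)| < c/(4*d0) := by linarith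
        have h7 := mul_lt_mul_of_pos_left h6 hd02
        have h8 : (2*d0) * (c/(4*d0)) = c/2 := by field_simp; ring
        have h9 : c = tildeFn u.1 (2*d0) := hc
        linarith
      have hvcont : ContinuousOn (tildeFn v.1) (Set.Icc (d0/2) (2*d0)) := by
        have : ContinuousOn (fun d => d * v.1 d) (Set.Ioi 0) := continuousOn_id.mul v.2.continuousOn
        refine ContinuousOn.mono ?_ (fun x hx => Set.mem_Ioi.mpr (lt_of_lt_of_le hd0h hx.1))
        exact this
      have hsub := intermediate_value_Icc (by linarith : d0/2 ≤ 2*d0) hvcont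
      have : (0:ℝ) ∈ Set.Icc (tildeFn v.1 (d0/2)) (tildeFn v.1 (2*d0)) := ⟨hva.le, hvb.le⟩
      obtain ⟨x, hx, hxz⟩ := hsub this
      exact ⟨x, lt_of_lt_of_le hd0h hx.1, hxz⟩
    · -- tendsto atBot
      refine Filter.tendsto_atBot_mono' _ ?_ (Filter.tendsto_atBot_add_const_right _ 1 hu4)
      filter_upwards [Ioo_mem_nhdsGT_of_mem (show (0:ℝ) ∈ Set.Ico (0:ℝ) 1 from ⟨le_rfl, one_pos⟩)]
        with d hd
      obtain ⟨hd0', hd1⟩ := hd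
      have hsubset : Set.Icc d 1 ⊆ Set.Ioi 0 := fun x hx => lt_of_lt_of_le hd0' hx.1
      have huIcc : Set.uIcc d 1 = Set.Icc d 1 := Set.uIcc_of_le hd1.le
      have hIv : IntervalIntegrable (tildeFn v.1) volume d 1 := by
        apply ContinuousOn.intervalIntegrable
        rw [huIcc]
        have : ContinuousOn (fun x => x * v.1 x) (Set.Ioi 0) := continuousOn_id.mul v.2.continuousOn
        exact ContinuousOn.mono this hsubset
      have hIu0 : IntervalIntegrable (tildeFn u.1) volume d 1 := by
        apply ContinuousOn.intervalIntegrable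
        rw [huIcc]
        exact tcont.mono hsubset
      have hIu : IntervalIntegrable (fun x => tildeFn u.1 x + 1) volume d 1 :=
        hIu0.add intervalIntegrable_const
      have hbound : ∀ x ∈ Set.Icc d 1, tildeFn v.1 x ≤ tildeFn u.1 x + 1 := by
        intro x hx
        have hxpos : (0:ℝ) < x := lt_of_lt_of_le hd0' hx.1
        have h1 := hv x hxpos
        have h2 : δ x ≤ x⁻¹ := hδi x hxpos
        have h3 : tildeFn v.1 x - tildeFn u.1 x = x * (v.1 x - u.1 x) := tdiff x
        have h4 : v.1 x - u.1 x ≤ |v.1 x - u.1 x| := le_abs_self _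
        have h5 : x * δ x ≤ 1 := by
          calc x * δ x ≤ x * x⁻¹ := by nlinarith
            _ = 1 := mul_inv_cancel₀ (ne_of_gt hxpos)
        nlinarith [abs_nonneg (deriv v.1 x - deriv u.1 x), abs_nonneg (v.1 x - u.1 x)]
      have hmono := intervalIntegral.integral_mono_on hd1.le hIv hIu hbound
      have hsplit : ∫ x in d..(1:ℝ), (tildeFn u.1 x + 1) = (∫ x in d..(1:ℝ), tildeFn u.1 x) + (1 - d) := by
        rw [intervalIntegral.integral_add hIu0 intervalIntegrable_const]
        simp

      calc (∫ x in d..(1:ℝ), tildeFn v.1 x) ≤ ∫ x in d..(1:ℝ), (tildeFn u.1 x + 1) := hmono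
        _ = (∫ x in d..(1:ℝ), tildeFn u.1 x) + (1 - d) := hsplit
        _ ≤ (∫ x in d..(1:ℝ), tildeFn u.1 x) + 1 := by linarith
  · -- u in ball
    intro d hd
    simpa using hδp d hd
end Aux

/-- the map `ρ₁ : 𝓕^{2N−3} → 𝓕^{2N−5}`,
`(f₁₂, f₁₃, f₂₃, h) ↦ (f₂₃ + g₂₃, h)` (with `g₂₃` the case-1 virtual interaction induced by
`f₁₂, f₁₃`), is an open map for the Whitney `C¹`-topologies. -/
theorem statement13 (N : ℕ) (hN : 3 ≤ N)
    (ρ : FF × FF × FF × (Fin (2*N-6) → FF) → FF × (Fin (2*N-6) → FF))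
    (hρ : ∀ x : FF × FF × FF × (Fin (2*N-6) → FF),
      ((ρ x).1.1.1 = fun d => x.2.2.1.1.1 d + g23Case1 x.1.1.1 x.2.1.1.1 d) ∧
      (ρ x).2 = x.2.2.2) :
    IsOpenMap ρ := by
  apply IsOpenMap.of_nhds_le
  rintro ⟨f12, f13, f23, hh⟩
  set x₀ : FF × FF × FF × (Fin (2*N-6) → FF) := (f12, f13, f23, hh) with hx₀
  obtain ⟨hρ1, hρ2⟩ := hρ x₀
  have hgeq : g23Case1 f12.1.1 f13.1.1 = fun d => (ρ x₀).1.1.1 d - f23.1.1 d := by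
    funext d
    rw [hρ1]
    show g23Case1 x₀.1.1.1 x₀.2.1.1.1 d
      = (x₀.2.2.1.1.1 d + g23Case1 x₀.1.1.1 x₀.2.1.1.1 d) - x₀.2.2.1.1.1 d
    ring
  have hg : ContDiffOn ℝ 1 (g23Case1 f12.1.1 f13.1.1) (Set.Ioi 0) := by
    rw [hgeq]; exact (ρ x₀).1.1.2.sub f23.1.2
  set T : C1Pos → C1Pos := subMap (g23Case1 f12.1.1 f13.1.1) hg with hT
  have hTcont : Continuous T := continuous_subC1 _ hg
  set N' : Set FF := {F : FF | MemF (T F.1).1} with hN'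
  have hN'open : IsOpen N' := by
    have h : N' = (fun F : FF => T F.1) ⁻¹' {u : C1Pos | MemF u.1} := rfl
    rw [h]
    exact (hTcont.comp continuous_subtype_val).isOpen_preimage _ isOpen_memF
  have hTy0 : (T (ρ x₀).1.1).1 = f23.1.1 := by
    funext d
    show (ρ x₀).1.1.1 d - g23Case1 f12.1.1 f13.1.1 d = f23.1.1 d
    rw [hρ1]
    show (x₀.2.2.1.1.1 d + g23Case1 x₀.1.1.1 x₀.2.1.1.1 d)
      - g23Case1 x₀.1.1.1 x₀.2.1.1.1 d = x₀.2.2.1.1.1 d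
    ring
  have hy0N' : (ρ x₀).1 ∈ N' := by
    show MemF (T (ρ x₀).1.1).1
    rw [hTy0]
    exact f23.2
  set c23 : FF → FF := fun F => if h : MemF (T F.1).1 then ⟨T F.1, h⟩ else f23 with hc23def
  set s : FF × (Fin (2*N-6) → FF) → FF × FF × FF × (Fin (2*N-6) → FF) :=
    fun y => (f12, f13, c23 y.1, y.2) with hsdef
  have hc23y0 : c23 (ρ x₀).1 = f23 := by
    rw [hc23def]
    simp only
    refine (dif_pos (show MemF (T (ρ x₀).1.1).1 from hy0N')).trans ?_
    exact Subtype.ext (Subtype.ext hTy0)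
  have hsy0 : s (ρ x₀) = x₀ := by
    rw [hsdef]
    simp only
    rw [hc23y0, hρ2]
  have hc23cont : ContinuousAt c23 (ρ x₀).1 := by
    refine (Topology.IsInducing.subtypeVal (t := {f : C1Pos | MemF f.1})).continuousAt_iff.mpr ?_
    have hEv : (fun F : FF => T F.1) =ᶠ[𝓝 (ρ x₀).1] (Subtype.val ∘ c23) := by
      filter_upwards [hN'open.mem_nhds hy0N'] with F hF
      show T F.1 = (c23 F).1
      rw [hc23def]
      simp only
      refine Eq.symm ((congrArg Subtype.val (dif_pos (show MemF (T F.1).1 from hF))).trans ?_)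
      rfl
    exact ((hTcont.comp continuous_subtype_val).continuousAt).congr hEv
  have hscont : ContinuousAt s (ρ x₀) := by
    rw [hsdef]
    exact ContinuousAt.prodMk continuousAt_const (ContinuousAt.prodMk continuousAt_const
      (ContinuousAt.prodMk (hc23cont.comp continuous_fst.continuousAt)
        continuous_snd.continuousAt))
  have hρs : ∀ y : FF × (Fin (2*N-6) → FF), y.1 ∈ N' → ρ (s y) = y := by
    rintro ⟨F, k⟩ hF
    obtain ⟨h1, h2⟩ := hρ (s (F, k))
    have hc : c23 F = ⟨T F.1, (show MemF (T F.1).1 from hF)⟩ := by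
      rw [hc23def]; simp only; exact dif_pos (show MemF (T F.1).1 from hF)
    have hs1 : (s (F,k)).1 = f12 := by rw [hsdef]
    have hs2 : (s (F,k)).2.1 = f13 := by rw [hsdef]
    have hs3 : (s (F,k)).2.2.1 = c23 F := by rw [hsdef]
    have hs4 : (s (F,k)).2.2.2 = k := by rw [hsdef]
    apply Prod.ext
    · apply Subtype.ext
      apply Subtype.ext
      rw [h1]
      funext d
      rw [hs1, hs2, hs3, hc]
      show (T F.1).1 d + g23Case1 f12.1.1 f13.1.1 d = F.1.1 d
      show (F.1.1 d - g23Case1 f12.1.1 f13.1.1 d) + g23Case1 f12.1.1 f13.1.1 d = F.1.1 d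
      ring
    · rw [h2, hs4]
  rw [Filter.le_def]
  intro W hW
  have hW' : ρ ⁻¹' W ∈ 𝓝 x₀ := Filter.mem_map.mp hW
  have hpre : s ⁻¹' (ρ ⁻¹' W) ∈ 𝓝 (ρ x₀) :=
    hscont.preimage_mem_nhds (by rw [hsy0]; exact hW')
  have hNmem : (Prod.fst ⁻¹' N') ∈ 𝓝 (ρ x₀) :=
    continuous_fst.continuousAt.preimage_mem_nhds (hN'open.mem_nhds hy0N')
  refine Filter.mem_of_superset (Filter.inter_mem hNmem hpre) ?_
  rintro y ⟨hy1, hy2⟩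
  have hy := hρs y hy1
  rw [← hy]
  exact hy2
end

section
/- Fix d > 0. The map η_d : 𝓕² → ℝ² sending (f_12, f_13) to the unique balanced pair (d_12, d_13) (with d_12 + d_13 = d and f̃_12(d_12) = f̃_13(d_13)) is continuous with respect to the Whitney C¹-topology on 𝓕². Consequently the map (f_12, f_13) ↦ (g_23(d), g′_23(d)) is continuous, where g_23 is the case-1 virtual interaction induced by f_12 and f_13. -/
open Set Filter Topology MeasureTheory Matrix Function

attribute [local instance] Classical.propDecidable

noncomputable section

section Aux
open Set Filter Topology



lemma memF_diffAt {f : ℝ → ℝ} (hf : MemF f) {t : ℝ} (ht : 0 < t) :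
    DifferentiableAt ℝ f t := by
  have := (hf.1.differentiableOn one_ne_zero).differentiableAt (Ioi_mem_nhds ht)
  exact this

lemma tilde_diffAt {f : ℝ → ℝ} (hf : MemF f) {t : ℝ} (ht : 0 < t) :
    DifferentiableAt ℝ (tildeFn f) t :=
  (differentiableAt_id.mul (memF_diffAt hf ht))

lemma tilde_hasDerivAt {f : ℝ → ℝ} (hf : MemF f) {t : ℝ} (ht : 0 < t) :
    HasDerivAt (tildeFn f) (deriv (tildeFn f) t) t :=
  (tilde_diffAt hf ht).hasDerivAt

lemma tilde_contAt {f : ℝ → ℝ} (hf : MemF f) {t : ℝ} (ht : 0 < t) :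
    ContinuousAt (tildeFn f) t := (tilde_diffAt hf ht).continuousAt

lemma tilde_strictMonoOn {f : ℝ → ℝ} (hf : MemF f) :
    StrictMonoOn (tildeFn f) (Set.Ioi 0) := by
  apply strictMonoOn_of_deriv_pos (convex_Ioi 0)
  · exact fun t ht => (tilde_contAt hf ht).continuousWithinAt
  · intro t ht
    rw [interior_Ioi] at ht
    exact hf.2.1 t ht

lemma tilde_tendsto_atBot {f : ℝ → ℝ} (hf : MemF f) :
    Tendsto (tildeFn f) (𝓝[>] (0:ℝ)) atBot := by
  rw [tendsto_atBot]
  intro M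
  by_cases hex : ∃ t₁ ∈ Ioo (0:ℝ) 1, tildeFn f t₁ ≤ M
  · obtain ⟨t₁, ht₁, hM⟩ := hex
    filter_upwards [Ioo_mem_nhdsGT_of_mem (by constructor <;> simp [ht₁.1] : (0:ℝ) ∈ Ico 0 t₁)]
      with t ht
    exact le_trans (le_of_lt ((tilde_strictMonoOn hf) ht.1 ht₁.1 ht.2)) hM
  · exfalso
    push_neg at hex
    have hlow : ∀ t ∈ Ioo (0:ℝ) 1, M ≤ tildeFn f t := fun t ht => (hex t ht).le
    have hlow1 : M ≤ tildeFn f 1 := by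
      refine le_trans (hlow (1/2) (by norm_num)) (le_of_lt ?_)
      exact (tilde_strictMonoOn hf) (by norm_num) (by norm_num) (by norm_num)
    have hbd : ∀ t ∈ Ioo (0:ℝ) 1, M * (1 - t) ≤ (∫ x in t..(1:ℝ), tildeFn f x) := by
      intro t ht
      have hint : IntervalIntegrable (tildeFn f) MeasureTheory.volume t 1 := by
        apply ContinuousOn.intervalIntegrable
        intro x hx
        rw [uIcc_of_le ht.2.le] at hx
        exact (tilde_contAt hf (lt_of_lt_of_le ht.1 hx.1)).continuousWithinAt
      have h2 : (∫ x in t..(1:ℝ), (M:ℝ)) ≤ ∫ x in t..(1:ℝ), tildeFn f x := by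
        apply intervalIntegral.integral_mono_on ht.2.le intervalIntegrable_const hint
        intro x hx
        rcases eq_or_lt_of_le hx.2 with h1 | h1
        · rw [h1]; exact hlow1
        · exact hlow x ⟨lt_of_lt_of_le ht.1 hx.1, h1⟩
      simpa [intervalIntegral.integral_const, smul_eq_mul, mul_comm] using h2
    have := (tendsto_atBot.mp hf.2.2.2) (min M 0 - 1)
    obtain ⟨t, hle, ht⟩ := ((this.and (Ioo_mem_nhdsGT_of_mem
      (by norm_num : (0:ℝ) ∈ Ico (0:ℝ) 1))).exists)
    have h3 := hbd t ht
    have h4 : min M 0 ≤ M * (1 - t) := by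
      rcases le_or_gt M 0 with h | h
      · have : min M 0 = M := min_eq_left h
        nlinarith [ht.1, ht.2]
      · have : min M 0 = 0 := min_eq_right h.le
        nlinarith [ht.1, ht.2]
    linarith


variable {f12 f13 : ℝ → ℝ} {d : ℝ}

lemma balance_exists (h12 : MemF f12) (h13 : MemF f13) (hd : 0 < d) :
    ∃ t, 0 < t ∧ t < d ∧ tildeFn f12 t = tildeFn f13 (d - t) := by
  set h : ℝ → ℝ := fun t => tildeFn f12 t - tildeFn f13 (d - t) with hh
  obtain ⟨a, ha, hax⟩ : ∃ a, (0 < a ∧ a < d/2) ∧ h a < 0 := by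
    have h1 : ∀ᶠ t in 𝓝[>] (0:ℝ), tildeFn f12 t ≤ tildeFn f13 (d/2) - 1 :=
      (tendsto_atBot.mp (tilde_tendsto_atBot h12)) _
    have h2 : ∀ᶠ t in 𝓝[>] (0:ℝ), (0 < t ∧ t < d/2) := by
      have : Ioo (0:ℝ) (d/2) ∈ 𝓝[>] (0:ℝ) :=
        Ioo_mem_nhdsGT_of_mem ⟨le_rfl, by positivity⟩
      filter_upwards [this] with t ht using ht
    obtain ⟨a, h1a, h2a⟩ := (h1.and h2).exists
    refine ⟨a, h2a, ?_⟩
    have hmono : tildeFn f13 (d/2) ≤ tildeFn f13 (d - a) :=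
      (tilde_strictMonoOn h13).monotoneOn (by simp; positivity)
        (by simp; linarith [h2a.1, h2a.2]) (by linarith [h2a.2])
    simp only [hh]; linarith
  obtain ⟨b, hb, hbx⟩ : ∃ b, (d/2 < b ∧ b < d) ∧ 0 < h b := by
    have h1 : ∀ᶠ s in 𝓝[>] (0:ℝ), tildeFn f13 s ≤ tildeFn f12 (d/2) - 1 :=
      (tendsto_atBot.mp (tilde_tendsto_atBot h13)) _
    have h2 : ∀ᶠ s in 𝓝[>] (0:ℝ), (0 < s ∧ s < d/2) := by
      have : Ioo (0:ℝ) (d/2) ∈ 𝓝[>] (0:ℝ) :=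
        Ioo_mem_nhdsGT_of_mem ⟨le_rfl, by positivity⟩
      filter_upwards [this] with t ht using ht
    obtain ⟨s, h1s, h2s⟩ := (h1.and h2).exists
    refine ⟨d - s, ⟨by linarith [h2s.1, h2s.2], by linarith [h2s.1]⟩, ?_⟩
    have hmono : tildeFn f12 (d/2) ≤ tildeFn f12 (d - s) :=
      (tilde_strictMonoOn h12).monotoneOn (by simp; positivity)
        (by simp; linarith [h2s.1, h2s.2]) (by linarith [h2s.2])
    simp only [hh]; rw [sub_sub_cancel]; linarith
  have hab : a < b := by linarith [ha.2, hb.1]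
  have hcont : ContinuousOn h (Icc a b) := by
    intro x hx
    have hx0 : 0 < x := lt_of_lt_of_le ha.1 hx.1
    have hdx : 0 < d - x := by linarith [lt_of_le_of_lt hx.2 hb.2]
    exact ((tilde_contAt h12 hx0).sub
      ((tilde_contAt h13 hdx).comp ((continuousAt_const.sub continuousAt_id)))).continuousWithinAt
  obtain ⟨t, ht, hht⟩ := intermediate_value_Icc hab.le hcont ⟨hax.le, hbx.le⟩
  refine ⟨t, lt_of_lt_of_le ha.1 ht.1, lt_of_le_of_lt ht.2 hb.2, ?_⟩
  have : tildeFn f12 t - tildeFn f13 (d - t) = 0 := hht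
  linarith

lemma balance_strictMono (h12 : MemF f12) (h13 : MemF f13) :
    ∀ s t : ℝ, 0 < s → s < t → t < d →
    tildeFn f12 s - tildeFn f13 (d - s) < tildeFn f12 t - tildeFn f13 (d - t) := by
  intro s t hs hst htd
  have h1 : tildeFn f12 s < tildeFn f12 t :=
    (tilde_strictMonoOn h12) (by simp [hs]) (by simp; linarith) hst
  have h2 : tildeFn f13 (d - t) < tildeFn f13 (d - s) :=
    (tilde_strictMonoOn h13) (by simp; linarith) (by simp; linarith) (by linarith)
  linarith

lemma case1d12_spec (h12 : MemF f12) (h13 : MemF f13) (hd : 0 < d) :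
    0 < case1d12 f12 f13 d ∧ case1d12 f12 f13 d < d ∧
    tildeFn f12 (case1d12 f12 f13 d) = tildeFn f13 (d - case1d12 f12 f13 d) :=
  Classical.epsilon_spec (balance_exists h12 h13 hd)

/-- quantitative localization of the root from sign conditions -/
lemma case1d12_mem (h12 : MemF f12) (h13 : MemF f13) (hd : 0 < d) {a b : ℝ}
    (ha : 0 < a) (hab : a < b) (hb : b < d)
    (hfa : tildeFn f12 a < tildeFn f13 (d - a))
    (hfb : tildeFn f13 (d - b) < tildeFn f12 b) :
    a < case1d12 f12 f13 d ∧ case1d12 f12 f13 d < b := by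
  obtain ⟨ht0, htd, hteq⟩ := case1d12_spec h12 h13 hd
  set t := case1d12 f12 f13 d with hT
  constructor
  · rcases lt_trichotomy a t with h | h | h
    · exact h
    · exfalso; rw [h] at hfa; linarith
    · exfalso
      have := balance_strictMono h12 h13 t a ht0 h (lt_trans hab hb)
      linarith
  · rcases lt_trichotomy t b with h | h | h
    · exact h
    · exfalso; rw [← h] at hfb; linarith
    · exfalso
      have := balance_strictMono h12 h13 b t (lt_trans ha hab) h htd
      linarith

lemma case1d12_contAt (h12 : MemF f12) (h13 : MemF f13) (hd : 0 < d) :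
    ContinuousAt (fun d' => case1d12 f12 f13 d') d := by
  obtain ⟨ht0, htd, hteq⟩ := case1d12_spec h12 h13 hd
  set t₀ := case1d12 f12 f13 d with hT
  rw [ContinuousAt, Metric.tendsto_nhds]
  intro ε hε
  set ε' := min ε (min (t₀/2) ((d - t₀)/3)) with hε'
  have hε'pos : 0 < ε' := lt_min hε (lt_min (by linarith) (by linarith))
  set a := t₀ - ε' with ha'
  set b := t₀ + ε' with hb'
  have hεle : ε' ≤ ε := min_le_left _ _
  have hε2 : ε' ≤ t₀/2 := le_trans (min_le_right _ _) (min_le_left _ _)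
  have hε3 : ε' ≤ (d - t₀)/3 := le_trans (min_le_right _ _) (min_le_right _ _)
  have ha0 : 0 < a := by simp only [ha']; linarith
  have hab : a < b := by simp only [ha', hb']; linarith
  have hbd : b < d := by simp only [hb']; linarith
  have hda : 0 < d - a := by linarith
  have hdb : 0 < d - b := by linarith
  -- strict sign conditions at a and b for parameter d
  have hsa : tildeFn f12 a < tildeFn f13 (d - a) := by
    have := balance_strictMono h12 h13 a t₀ ha0 (by simp only [ha']; linarith) htd
    linarith
  have hsb : tildeFn f13 (d - b) < tildeFn f12 b := by
    have := balance_strictMono h12 h13 t₀ b ht0 (by simp only [hb']; linarith) hbd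
    linarith
  -- eventual sign conditions for d' near d
  have hc13a : ContinuousAt (fun d' => tildeFn f13 (d' - a)) d := by
    exact ContinuousAt.comp (f := fun d' => d' - a) (x := d) (tilde_contAt h13 hda)
      (continuousAt_id.sub continuousAt_const)
  have hc13b : ContinuousAt (fun d' => tildeFn f13 (d' - b)) d := by
    exact ContinuousAt.comp (f := fun d' => d' - b) (x := d) (tilde_contAt h13 hdb)
      (continuousAt_id.sub continuousAt_const)
  have E1 : ∀ᶠ d' in 𝓝 d, tildeFn f12 a < tildeFn f13 (d' - a) :=
    continuousAt_const.eventually_lt hc13a hsa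
  have E2 : ∀ᶠ d' in 𝓝 d, tildeFn f13 (d' - b) < tildeFn f12 b :=
    hc13b.eventually_lt continuousAt_const hsb
  have E3 : ∀ᶠ d' in 𝓝 d, b < d' := eventually_gt_nhds hbd
  filter_upwards [E1, E2, E3] with d' h1 h2 h3
  have hd' : 0 < d' := lt_trans (lt_trans ha0 hab) h3
  obtain ⟨hl, hr⟩ := case1d12_mem h12 h13 hd' ha0 hab h3 h1 h2
  rw [Real.dist_eq, abs_sub_lt_iff]
  constructor <;> simp only [ha', hb'] at hl hr <;> linarith


lemma case1d12_hasDerivAt (h12 : MemF f12) (h13 : MemF f13) (hd : 0 < d) :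
    HasDerivAt (fun d' => case1d12 f12 f13 d')
      ((1 + (deriv (tildeFn f13) (d - case1d12 f12 f13 d))⁻¹ *
        deriv (tildeFn f12) (case1d12 f12 f13 d))⁻¹) d := by
  obtain ⟨ht0, htd, hteq⟩ := case1d12_spec h12 h13 hd
  set t₀ := case1d12 f12 f13 d with hT
  set u := d - t₀ with hu'
  have hu : 0 < u := by simp only [hu']; linarith
  set s12 := deriv (tildeFn f12) t₀ with hs12'
  set s13 := deriv (tildeFn f13) u with hs13'
  have hs12 : 0 < s12 := h12.2.1 t₀ ht0
  have hs13 : 0 < s13 := h13.2.1 u hu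
  set a := u/2 with ha'
  set b := u + 1 with hb'
  have ha0 : 0 < a := by positivity
  have hab : a < b := by simp only [ha', hb']; linarith
  have hmemu : u ∈ Ioo a b := ⟨by simp only [ha']; linarith, by simp only [hb']; linarith⟩
  -- the clamp and the extended function F
  set clamp : ℝ → ℝ := fun t => max a (min t b) with hclamp
  have hclamp_mem : ∀ t, clamp t ∈ Icc a b := fun t =>
    ⟨le_max_left _ _, max_le (by linarith) (min_le_right _ _)⟩
  have hclamp_id : ∀ t ∈ Icc a b, clamp t = t := by
    intro t ht
    simp only [hclamp]
    rw [min_eq_left ht.2, max_eq_right ht.1]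
  have hclamp_mono : Monotone clamp := fun s t hst =>
    max_le_max le_rfl (min_le_min hst le_rfl)
  have hclamp_lip : ∀ s t : ℝ, s ≤ t → clamp t - clamp s ≤ t - s := by
    intro s t hst
    simp only [hclamp]
    simp only [hclamp, max_def, min_def]
    split_ifs <;> linarith
  set F : ℝ → ℝ := fun t => tildeFn f13 (clamp t) + (t - clamp t) with hF
  have hFeq : ∀ t ∈ Icc a b, F t = tildeFn f13 t := by
    intro t ht; simp only [hF, hclamp_id t ht]; ring
  have hFmono : StrictMono F := by
    intro s t hst
    have h1 : tildeFn f13 (clamp s) ≤ tildeFn f13 (clamp t) :=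
      (tilde_strictMonoOn h13).monotoneOn (lt_of_lt_of_le ha0 (hclamp_mem s).1)
        (lt_of_lt_of_le ha0 (hclamp_mem t).1) (hclamp_mono hst.le)
    rcases eq_or_lt_of_le (hclamp_mono hst.le) with h | h
    · have := hclamp_lip s t hst.le
      simp only [hF]; rw [h] at *; linarith
    · have h2 : tildeFn f13 (clamp s) < tildeFn f13 (clamp t) :=
        (tilde_strictMonoOn h13) (lt_of_lt_of_le ha0 (hclamp_mem s).1)
          (lt_of_lt_of_le ha0 (hclamp_mem t).1) h
      have := hclamp_lip s t hst.le
      simp only [hF]; linarith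
  have hclamp_cont : Continuous clamp :=
    continuous_const.max (continuous_id.min continuous_const)
  have hFcont : Continuous F := by
    rw [continuous_iff_continuousAt]
    intro t
    have h1 : ContinuousAt (tildeFn f13) (clamp t) :=
      tilde_contAt h13 (lt_of_lt_of_le ha0 (hclamp_mem t).1)
    exact (h1.comp hclamp_cont.continuousAt).add
      (continuousAt_id.sub hclamp_cont.continuousAt)
  have hFtop : Tendsto F atTop atTop := by
    have hev : (fun t => (tildeFn f13 b - b) + t) ≤ᶠ[atTop] F := by
      filter_upwards [eventually_ge_atTop b] with t ht
      have hcl : clamp t = b := by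
        simp only [hclamp]; rw [min_eq_right ht, max_eq_right hab.le]
      simp only [hF, hcl]; linarith
    exact tendsto_atTop_mono' atTop hev (tendsto_atTop_add_const_left _ _ tendsto_id)
  have hFbot : Tendsto F atBot atBot := by
    have hev : F ≤ᶠ[atBot] (fun t => (tildeFn f13 a - a) + t) := by
      filter_upwards [eventually_le_atBot a] with t ht
      have hcl : clamp t = a := by
        simp only [hclamp]; rw [max_eq_left]; exact le_trans (min_le_left _ _) ht
      simp only [hF, hcl]; linarith
    exact tendsto_atBot_mono' atBot hev (tendsto_atBot_add_const_left _ _ tendsto_id)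
  have hFsurj : Function.Surjective F := hFcont.surjective hFtop hFbot
  set E := StrictMono.orderIsoOfSurjective F hFmono hFsurj with hE
  set inv : ℝ → ℝ := fun y => E.symm y with hinv
  have hinv_cont : Continuous inv := E.symm.continuous
  have hFinv : ∀ y, F (inv y) = y := fun y =>
    StrictMono.orderIsoOfSurjective_self_symm_apply F hFmono hFsurj y
  have hinvF : ∀ t, inv (F t) = t := fun t =>
    StrictMono.orderIsoOfSurjective_symm_apply_self F hFmono hFsurj t
  set y₀ := tildeFn f12 t₀ with hy₀
  have hFu : F u = y₀ := by
    show F u = tildeFn f12 t₀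
    rw [hFeq u ⟨hmemu.1.le, hmemu.2.le⟩]
    exact hteq.symm
  have hinvy₀ : inv y₀ = u := by rw [← hFu, hinvF]
  -- derivative of inv at y₀
  have hinv_deriv : HasDerivAt inv s13⁻¹ y₀ := by
    apply HasDerivAt.of_local_left_inverse hinv_cont.continuousAt
      (f := tildeFn f13) (by rw [hinvy₀]; exact tilde_hasDerivAt h13 hu) hs13.ne'
    have hmem : ∀ᶠ y in 𝓝 y₀, inv y ∈ Ioo a b := by
      apply hinv_cont.continuousAt.eventually_mem
      rw [hinvy₀]
      exact isOpen_Ioo.mem_nhds hmemu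
    filter_upwards [hmem] with y hy
    rw [← hFeq (inv y) ⟨hy.1.le, hy.2.le⟩, hFinv]
  -- Φ and its derivative
  set Φ : ℝ → ℝ := fun t => t + inv (tildeFn f12 t) with hΦ
  have hΦderiv : HasDerivAt Φ (1 + s13⁻¹ * s12) t₀ := by
    apply (hasDerivAt_id t₀).add
    exact HasDerivAt.comp t₀ (by rw [← hy₀] at *; exact hinv_deriv) (tilde_hasDerivAt h12 ht0)
  have hΦ'pos : 0 < 1 + s13⁻¹ * s12 := by positivity
  -- local left inverse property
  have hcont := case1d12_contAt h12 h13 hd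
  have heq : ∀ᶠ d' in 𝓝 d, Φ (case1d12 f12 f13 d') = d' := by
    have hmem : ∀ᶠ d' in 𝓝 d, d' - case1d12 f12 f13 d' ∈ Ioo a b := by
      apply ContinuousAt.eventually_mem (continuousAt_id.sub hcont)
      have : d - case1d12 f12 f13 d = u := rfl
      show Ioo a b ∈ 𝓝 (d - case1d12 f12 f13 d)
      rw [this]
      exact isOpen_Ioo.mem_nhds hmemu
    filter_upwards [hmem, eventually_gt_nhds hd] with d' hmem' hd'
    obtain ⟨h1, h2, h3⟩ := case1d12_spec h12 h13 hd'
    simp only [hΦ]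
    rw [h3, ← hFeq _ ⟨hmem'.1.le, hmem'.2.le⟩, hinvF]
    ring
  have := HasDerivAt.of_local_left_inverse hcont
    (by exact hΦderiv)
    hΦ'pos.ne' heq
  exact this








/-- constant-radius Whitney balls are open -/
lemma ballOpen (f : C1Pos) (c : ℝ) (hc : 0 < c) :
    IsOpen { g : C1Pos | ∀ t > (0:ℝ), |g.1 t - f.1 t| + |deriv g.1 t - deriv f.1 t| < c } :=
  TopologicalSpace.isOpen_generateFrom_of_mem
    ⟨f, fun _ => c, continuousOn_const, fun _ _ => hc, rfl⟩

lemma ballOpenFF (f : C1Pos) (c : ℝ) (hc : 0 < c) :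
    IsOpen { g : FF | ∀ t > (0:ℝ), |g.1.1 t - f.1 t| + |deriv g.1.1 t - deriv f.1 t| < c } :=
  (ballOpen f c hc).preimage continuous_subtype_val

lemma ball_self (f : C1Pos) (c : ℝ) (hc : 0 < c) :
    ∀ t > (0:ℝ), |f.1 t - f.1 t| + |deriv f.1 t - deriv f.1 t| < c := by
  intro t _; simpa using hc

/-- continuity of the value of `f` on `Ioi 0` -/
lemma c1pos_contAt (g : C1Pos) {t : ℝ} (ht : 0 < t) : ContinuousAt g.1 t :=
  (g.2.continuousOn.continuousAt (Ioi_mem_nhds ht))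

/-- continuity of the derivative of a `C¹` function on `Ioi 0` -/
lemma c1pos_deriv_contAt (g : C1Pos) {t : ℝ} (ht : 0 < t) : ContinuousAt (deriv g.1) t := by
  have h : ContinuousOn (derivWithin g.1 (Ioi 0)) (Ioi 0) :=
    g.2.continuousOn_derivWithin isOpen_Ioi.uniqueDiffOn le_rfl
  have h2 : ContinuousOn (deriv g.1) (Ioi 0) :=
    h.congr fun x hx => (derivWithin_of_isOpen isOpen_Ioi hx).symm
  exact h2.continuousAt (Ioi_mem_nhds ht)

/-- closeness of tilde functions on Whitney balls -/
lemma tilde_close {g f : C1Pos} {c t D : ℝ}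
    (h : ∀ s > (0:ℝ), |g.1 s - f.1 s| + |deriv g.1 s - deriv f.1 s| < c)
    (ht : 0 < t) (htD : t ≤ D) :
    |tildeFn g.1 t - tildeFn f.1 t| < D * c := by
  have h1 := h t ht
  have h2 : |g.1 t - f.1 t| < c := by
    have := abs_nonneg (deriv g.1 t - deriv f.1 t); linarith
  have : |tildeFn g.1 t - tildeFn f.1 t| = t * |g.1 t - f.1 t| := by
    simp only [tildeFn]; rw [← mul_sub, abs_mul, abs_of_pos ht]
  rw [this]
  calc t * |g.1 t - f.1 t| < t * c := by
        exact mul_lt_mul_of_pos_left h2 ht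
    _ ≤ D * c := by
        have hc : 0 < c := lt_of_le_of_lt (abs_nonneg _) h2
        nlinarith



lemma deriv_tilde_eq {f : ℝ → ℝ} (hf : ContDiffOn ℝ 1 f (Set.Ioi 0)) {t : ℝ} (ht : 0 < t) :
    deriv (tildeFn f) t = f t + t * deriv f t := by
  have hdf : DifferentiableAt ℝ f t :=
    (hf.differentiableOn one_ne_zero).differentiableAt (Ioi_mem_nhds ht)
  have h := (hasDerivAt_id t).mul hdf.hasDerivAt
  have h2 := h.deriv
  rw [show tildeFn f = id * f from rfl]
  simpa using h2


lemma g23_deriv (h12 : MemF f12) (h13 : MemF f13) (hd : 0 < d) :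
    deriv (g23Case1 f12 f13) d =
      (deriv (tildeFn f12) (case1d12 f12 f13 d) *
        (1 + (deriv (tildeFn f13) (d - case1d12 f12 f13 d))⁻¹ *
          deriv (tildeFn f12) (case1d12 f12 f13 d))⁻¹ * d
        - tildeFn f12 (case1d12 f12 f13 d)) / d ^ 2 := by
  obtain ⟨ht0, htd, hteq⟩ := case1d12_spec h12 h13 hd
  have h1 : HasDerivAt (fun d' => tildeFn f12 (case1d12 f12 f13 d'))
      (deriv (tildeFn f12) (case1d12 f12 f13 d) *
        (1 + (deriv (tildeFn f13) (d - case1d12 f12 f13 d))⁻¹ *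
          deriv (tildeFn f12) (case1d12 f12 f13 d))⁻¹) d :=
    HasDerivAt.comp d (tilde_hasDerivAt h12 ht0) (case1d12_hasDerivAt h12 h13 hd)
  have h2 := h1.div (hasDerivAt_id d) hd.ne'
  rw [show g23Case1 f12 f13 = (fun d' => tildeFn f12 (case1d12 f12 f13 d') / id d') from rfl]
  rw [show (fun d' => tildeFn f12 (case1d12 f12 f13 d') / id d') = (fun d' => tildeFn f12 (case1d12 f12 f13 d')) / id from rfl, h2.deriv]
  simp [id]

/-- continuity in the pair of interaction laws of the balanced distance -/
lemma contD (hd : 0 < d) :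
    Continuous (fun x : FF × FF => case1d12 x.1.1.1 x.2.1.1 d) := by
  rw [continuous_iff_continuousAt]
  intro x₀
  rw [ContinuousAt, Metric.tendsto_nhds]
  intro ε hε
  obtain ⟨ht0, htd, hteq⟩ := case1d12_spec x₀.1.2 x₀.2.2 hd
  set t₀ := case1d12 x₀.1.1.1 x₀.2.1.1 d with hT
  set ε' := min ε (min (t₀/2) ((d - t₀)/3)) with hε'
  have hε'pos : 0 < ε' := lt_min hε (lt_min (by linarith) (by linarith))
  have hεle : ε' ≤ ε := min_le_left _ _
  have hε2 : ε' ≤ t₀/2 := le_trans (min_le_right _ _) (min_le_left _ _)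
  have hε3 : ε' ≤ (d - t₀)/3 := le_trans (min_le_right _ _) (min_le_right _ _)
  set a := t₀ - ε' with ha'
  set b := t₀ + ε' with hb'
  have ha0 : 0 < a := by simp only [ha']; linarith
  have hab : a < b := by simp only [ha', hb']; linarith
  have hbd : b < d := by simp only [hb']; linarith
  have hda : 0 < d - a := by linarith
  have hdb : 0 < d - b := by linarith
  have hsa : tildeFn x₀.1.1.1 a < tildeFn x₀.2.1.1 (d - a) := by
    have := balance_strictMono x₀.1.2 x₀.2.2 a t₀ ha0 (by simp only [ha']; linarith) htd
    linarith
  have hsb : tildeFn x₀.2.1.1 (d - b) < tildeFn x₀.1.1.1 b := by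
    have := balance_strictMono x₀.1.2 x₀.2.2 t₀ b ht0 (by simp only [hb']; linarith) hbd
    linarith
  set m := min (tildeFn x₀.2.1.1 (d - a) - tildeFn x₀.1.1.1 a)
              (tildeFn x₀.1.1.1 b - tildeFn x₀.2.1.1 (d - b)) with hm
  have hmpos : 0 < m := lt_min (by linarith) (by linarith)
  set c := m / (4 * (d + 1)) with hc
  have hcpos : 0 < c := by positivity
  have hdc : d * c ≤ m / 4 := by
    have h4 : (0:ℝ) < 4*(d+1) := by positivity
    rw [hc, mul_div_assoc', div_le_div_iff₀ h4 (by norm_num : (0:ℝ) < 4)]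
    nlinarith
  set U : Set (FF × FF) :=
    (Prod.fst ⁻¹' { g : FF | ∀ t > (0:ℝ),
        |g.1.1 t - x₀.1.1.1 t| + |deriv g.1.1 t - deriv x₀.1.1.1 t| < c }) ∩
    (Prod.snd ⁻¹' { g : FF | ∀ t > (0:ℝ),
        |g.1.1 t - x₀.2.1.1 t| + |deriv g.1.1 t - deriv x₀.2.1.1 t| < c }) with hU
  have hUopen : IsOpen U :=
    ((ballOpenFF x₀.1.1 c hcpos).preimage continuous_fst).inter
      ((ballOpenFF x₀.2.1 c hcpos).preimage continuous_snd)
  have hx₀U : x₀ ∈ U := ⟨ball_self x₀.1.1 c hcpos, ball_self x₀.2.1 c hcpos⟩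
  filter_upwards [hUopen.mem_nhds hx₀U] with y hy
  have b1 : |tildeFn y.1.1.1 a - tildeFn x₀.1.1.1 a| < d * c :=
    tilde_close hy.1 ha0 (by linarith)
  have b2 : |tildeFn y.2.1.1 (d - a) - tildeFn x₀.2.1.1 (d - a)| < d * c :=
    tilde_close hy.2 hda (by linarith)
  have b3 : |tildeFn y.1.1.1 b - tildeFn x₀.1.1.1 b| < d * c :=
    tilde_close hy.1 (lt_trans ha0 hab) (by linarith)
  have b4 : |tildeFn y.2.1.1 (d - b) - tildeFn x₀.2.1.1 (d - b)| < d * c :=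
    tilde_close hy.2 hdb (by linarith)
  have hm1 : m ≤ tildeFn x₀.2.1.1 (d - a) - tildeFn x₀.1.1.1 a := min_le_left _ _
  have hm2 : m ≤ tildeFn x₀.1.1.1 b - tildeFn x₀.2.1.1 (d - b) := min_le_right _ _
  have hsa' : tildeFn y.1.1.1 a < tildeFn y.2.1.1 (d - a) := by
    have e1 := abs_lt.mp b1
    have e2 := abs_lt.mp b2
    linarith [e1.1, e1.2, e2.1, e2.2]
  have hsb' : tildeFn y.2.1.1 (d - b) < tildeFn y.1.1.1 b := by
    have e3 := abs_lt.mp b3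
    have e4 := abs_lt.mp b4
    linarith [e3.1, e3.2, e4.1, e4.2]
  obtain ⟨hl, hr⟩ := case1d12_mem y.1.2 y.2.2 hd ha0 hab hbd hsa' hsb'
  rw [Real.dist_eq, abs_sub_lt_iff]
  constructor <;> simp only [ha', hb'] at hl hr <;> linarith

/-- evaluation along a continuous positive index is continuous (factor 1v) -/
lemma cont_eval1v (u : FF × FF → ℝ) (hu : Continuous u) (hpos : ∀ x, 0 < u x) :
    Continuous (fun x : FF × FF => (x.1.1.1) (u x)) := by
  rw [continuous_iff_continuousAt]
  intro x₀
  rw [ContinuousAt, Metric.tendsto_nhds]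
  intro ε hε
  have ht₀ : 0 < u x₀ := hpos x₀
  have hfc : ContinuousAt ((x₀.1.1.1)) (u x₀) := c1pos_contAt x₀.1.1 ht₀
  obtain ⟨η, hη, hball⟩ := Metric.continuousAt_iff.mp hfc (ε/2) (by positivity)
  set U : Set (FF × FF) :=
    (Prod.fst ⁻¹' { g : FF | ∀ t > (0:ℝ),
        |g.1.1 t - x₀.1.1.1 t| + |deriv g.1.1 t - deriv x₀.1.1.1 t| < ε/2 }) ∩
    (u ⁻¹' Metric.ball (u x₀) η) with hUdef
  have hUopen : IsOpen U :=
    ((ballOpenFF x₀.1.1 (ε/2) (by positivity)).preimage continuous_fst).inter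
      (Metric.isOpen_ball.preimage hu)
  have hx₀U : x₀ ∈ U :=
    ⟨ball_self x₀.1.1 (ε/2) (by positivity), Metric.mem_ball_self hη⟩
  filter_upwards [hUopen.mem_nhds hx₀U] with y hy
  have h1 := hy.1 (u y) (hpos y)
  have h2 := hball (show dist (u y) (u x₀) < η by simpa [Metric.mem_ball] using hy.2)
  rw [Real.dist_eq] at h2 ⊢
  have hother := abs_nonneg (deriv (y.1.1.1) (u y) - deriv (x₀.1.1.1) (u y))
  calc |(y.1.1.1) (u y) - (x₀.1.1.1) (u x₀)|
      ≤ |(y.1.1.1) (u y) - (x₀.1.1.1) (u y)|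
        + |(x₀.1.1.1) (u y) - (x₀.1.1.1) (u x₀)| := by
        have := abs_sub_le ((y.1.1.1) (u y)) ((x₀.1.1.1) (u y))
          ((x₀.1.1.1) (u x₀)); linarith
    _ < ε/2 + ε/2 := by apply add_lt_add <;> linarith
    _ = ε := by ring

/-- evaluation along a continuous positive index is continuous (factor 1d) -/
lemma cont_eval1d (u : FF × FF → ℝ) (hu : Continuous u) (hpos : ∀ x, 0 < u x) :
    Continuous (fun x : FF × FF => deriv (x.1.1.1) (u x)) := by
  rw [continuous_iff_continuousAt]
  intro x₀
  rw [ContinuousAt, Metric.tendsto_nhds]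
  intro ε hε
  have ht₀ : 0 < u x₀ := hpos x₀
  have hfc : ContinuousAt (deriv (x₀.1.1.1)) (u x₀) := c1pos_deriv_contAt x₀.1.1 ht₀
  obtain ⟨η, hη, hball⟩ := Metric.continuousAt_iff.mp hfc (ε/2) (by positivity)
  set U : Set (FF × FF) :=
    (Prod.fst ⁻¹' { g : FF | ∀ t > (0:ℝ),
        |g.1.1 t - x₀.1.1.1 t| + |deriv g.1.1 t - deriv x₀.1.1.1 t| < ε/2 }) ∩
    (u ⁻¹' Metric.ball (u x₀) η) with hUdef
  have hUopen : IsOpen U :=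
    ((ballOpenFF x₀.1.1 (ε/2) (by positivity)).preimage continuous_fst).inter
      (Metric.isOpen_ball.preimage hu)
  have hx₀U : x₀ ∈ U :=
    ⟨ball_self x₀.1.1 (ε/2) (by positivity), Metric.mem_ball_self hη⟩
  filter_upwards [hUopen.mem_nhds hx₀U] with y hy
  have h1 := hy.1 (u y) (hpos y)
  have h2 := hball (show dist (u y) (u x₀) < η by simpa [Metric.mem_ball] using hy.2)
  rw [Real.dist_eq] at h2 ⊢
  have hother := abs_nonneg ((y.1.1.1) (u y) - (x₀.1.1.1) (u y))
  calc |deriv (y.1.1.1) (u y) - deriv (x₀.1.1.1) (u x₀)|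
      ≤ |deriv (y.1.1.1) (u y) - deriv (x₀.1.1.1) (u y)|
        + |deriv (x₀.1.1.1) (u y) - deriv (x₀.1.1.1) (u x₀)| := by
        have := abs_sub_le (deriv (y.1.1.1) (u y)) (deriv (x₀.1.1.1) (u y))
          (deriv (x₀.1.1.1) (u x₀)); linarith
    _ < ε/2 + ε/2 := by apply add_lt_add <;> linarith
    _ = ε := by ring

/-- evaluation along a continuous positive index is continuous (factor 2v) -/
lemma cont_eval2v (u : FF × FF → ℝ) (hu : Continuous u) (hpos : ∀ x, 0 < u x) :
    Continuous (fun x : FF × FF => (x.2.1.1) (u x)) := by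
  rw [continuous_iff_continuousAt]
  intro x₀
  rw [ContinuousAt, Metric.tendsto_nhds]
  intro ε hε
  have ht₀ : 0 < u x₀ := hpos x₀
  have hfc : ContinuousAt ((x₀.2.1.1)) (u x₀) := c1pos_contAt x₀.2.1 ht₀
  obtain ⟨η, hη, hball⟩ := Metric.continuousAt_iff.mp hfc (ε/2) (by positivity)
  set U : Set (FF × FF) :=
    (Prod.snd ⁻¹' { g : FF | ∀ t > (0:ℝ),
        |g.1.1 t - x₀.2.1.1 t| + |deriv g.1.1 t - deriv x₀.2.1.1 t| < ε/2 }) ∩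
    (u ⁻¹' Metric.ball (u x₀) η) with hUdef
  have hUopen : IsOpen U :=
    ((ballOpenFF x₀.2.1 (ε/2) (by positivity)).preimage continuous_snd).inter
      (Metric.isOpen_ball.preimage hu)
  have hx₀U : x₀ ∈ U :=
    ⟨ball_self x₀.2.1 (ε/2) (by positivity), Metric.mem_ball_self hη⟩
  filter_upwards [hUopen.mem_nhds hx₀U] with y hy
  have h1 := hy.1 (u y) (hpos y)
  have h2 := hball (show dist (u y) (u x₀) < η by simpa [Metric.mem_ball] using hy.2)
  rw [Real.dist_eq] at h2 ⊢
  have hother := abs_nonneg (deriv (y.2.1.1) (u y) - deriv (x₀.2.1.1) (u y))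
  calc |(y.2.1.1) (u y) - (x₀.2.1.1) (u x₀)|
      ≤ |(y.2.1.1) (u y) - (x₀.2.1.1) (u y)|
        + |(x₀.2.1.1) (u y) - (x₀.2.1.1) (u x₀)| := by
        have := abs_sub_le ((y.2.1.1) (u y)) ((x₀.2.1.1) (u y))
          ((x₀.2.1.1) (u x₀)); linarith
    _ < ε/2 + ε/2 := by apply add_lt_add <;> linarith
    _ = ε := by ring

/-- evaluation along a continuous positive index is continuous (factor 2d) -/
lemma cont_eval2d (u : FF × FF → ℝ) (hu : Continuous u) (hpos : ∀ x, 0 < u x) :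
    Continuous (fun x : FF × FF => deriv (x.2.1.1) (u x)) := by
  rw [continuous_iff_continuousAt]
  intro x₀
  rw [ContinuousAt, Metric.tendsto_nhds]
  intro ε hε
  have ht₀ : 0 < u x₀ := hpos x₀
  have hfc : ContinuousAt (deriv (x₀.2.1.1)) (u x₀) := c1pos_deriv_contAt x₀.2.1 ht₀
  obtain ⟨η, hη, hball⟩ := Metric.continuousAt_iff.mp hfc (ε/2) (by positivity)
  set U : Set (FF × FF) :=
    (Prod.snd ⁻¹' { g : FF | ∀ t > (0:ℝ),
        |g.1.1 t - x₀.2.1.1 t| + |deriv g.1.1 t - deriv x₀.2.1.1 t| < ε/2 }) ∩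
    (u ⁻¹' Metric.ball (u x₀) η) with hUdef
  have hUopen : IsOpen U :=
    ((ballOpenFF x₀.2.1 (ε/2) (by positivity)).preimage continuous_snd).inter
      (Metric.isOpen_ball.preimage hu)
  have hx₀U : x₀ ∈ U :=
    ⟨ball_self x₀.2.1 (ε/2) (by positivity), Metric.mem_ball_self hη⟩
  filter_upwards [hUopen.mem_nhds hx₀U] with y hy
  have h1 := hy.1 (u y) (hpos y)
  have h2 := hball (show dist (u y) (u x₀) < η by simpa [Metric.mem_ball] using hy.2)
  rw [Real.dist_eq] at h2 ⊢
  have hother := abs_nonneg ((y.2.1.1) (u y) - (x₀.2.1.1) (u y))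
  calc |deriv (y.2.1.1) (u y) - deriv (x₀.2.1.1) (u x₀)|
      ≤ |deriv (y.2.1.1) (u y) - deriv (x₀.2.1.1) (u y)|
        + |deriv (x₀.2.1.1) (u y) - deriv (x₀.2.1.1) (u x₀)| := by
        have := abs_sub_le (deriv (y.2.1.1) (u y)) (deriv (x₀.2.1.1) (u y))
          (deriv (x₀.2.1.1) (u x₀)); linarith
    _ < ε/2 + ε/2 := by apply add_lt_add <;> linarith
    _ = ε := by ring



end Aux

end

/-- for fixed `d > 0`, the map `η_d : 𝓕² → ℝ²` sending `(f₁₂, f₁₃)` to the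
unique balanced pair `(d₁₂, d₁₃)` (with `d₁₂ + d₁₃ = d`, `f̃₁₂(d₁₂) = f̃₁₃(d₁₃)`) is
continuous for the Whitney `C¹`-topology; consequently `(f₁₂, f₁₃) ↦ (g₂₃(d), g′₂₃(d))`
is continuous, `g₂₃` being the case-1 virtual interaction. -/
theorem statement15 (d : ℝ) (hd : 0 < d) :
    Continuous (fun x : FF × FF =>
      ((case1d12 x.1.1.1 x.2.1.1 d, d - case1d12 x.1.1.1 x.2.1.1 d) : ℝ × ℝ)) ∧
    Continuous (fun x : FF × FF =>
      ((g23Case1 x.1.1.1 x.2.1.1 d, deriv (g23Case1 x.1.1.1 x.2.1.1) d) : ℝ × ℝ)) := by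
  have hD : Continuous (fun x : FF × FF => case1d12 x.1.1.1 x.2.1.1 d) := contD hd
  have hpos1 : ∀ x : FF × FF, 0 < case1d12 x.1.1.1 x.2.1.1 d :=
    fun x => (case1d12_spec x.1.2 x.2.2 hd).1
  have hpos2 : ∀ x : FF × FF, 0 < d - case1d12 x.1.1.1 x.2.1.1 d := fun x => by
    have := (case1d12_spec x.1.2 x.2.2 hd).2.1; linarith
  constructor
  · exact hD.prodMk (continuous_const.sub hD)
  · have hv1 := cont_eval1v _ hD hpos1
    have hd1 := cont_eval1d _ hD hpos1
    have hv2 := cont_eval2v _ (continuous_const.sub hD) hpos2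
    have hd2 := cont_eval2d _ (continuous_const.sub hD) hpos2
    set D := fun x : FF × FF => case1d12 x.1.1.1 x.2.1.1 d with hDdef
    set S12 := fun x : FF × FF => x.1.1.1 (D x) + D x * deriv x.1.1.1 (D x) with hS12
    set S13 := fun x : FF × FF =>
      x.2.1.1 (d - D x) + (d - D x) * deriv x.2.1.1 (d - D x) with hS13
    have hS12c : Continuous S12 := hv1.add (hD.mul hd1)
    have hS13c : Continuous S13 := hv2.add ((continuous_const.sub hD).mul hd2)
    have hS12eq : ∀ x : FF × FF, S12 x = deriv (tildeFn x.1.1.1) (D x) :=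
      fun x => (deriv_tilde_eq x.1.1.2 (hpos1 x)).symm
    have hS13eq : ∀ x : FF × FF, S13 x = deriv (tildeFn x.2.1.1) (d - D x) :=
      fun x => (deriv_tilde_eq x.2.1.2 (hpos2 x)).symm
    have hS12pos : ∀ x, 0 < S12 x := fun x => by
      rw [hS12eq x]; exact x.1.2.2.1 _ (hpos1 x)
    have hS13pos : ∀ x, 0 < S13 x := fun x => by
      rw [hS13eq x]; exact x.2.2.2.1 _ (hpos2 x)
    have hvalc : Continuous (fun x : FF × FF => g23Case1 x.1.1.1 x.2.1.1 d) := by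
      have h : (fun x : FF × FF => g23Case1 x.1.1.1 x.2.1.1 d)
          = fun x => (D x * x.1.1.1 (D x)) / d := rfl
      rw [h]
      exact (hD.mul hv1).div_const d
    have hderc : Continuous (fun x : FF × FF => deriv (g23Case1 x.1.1.1 x.2.1.1) d) := by
      have hder : (fun x : FF × FF => deriv (g23Case1 x.1.1.1 x.2.1.1) d)
          = fun x => (S12 x * (1 + (S13 x)⁻¹ * S12 x)⁻¹ * d
              - D x * x.1.1.1 (D x)) / d ^ 2 := by
        funext x
        rw [g23_deriv x.1.2 x.2.2 hd, hS12eq x, hS13eq x]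
        rfl
      rw [hder]
      apply Continuous.div_const
      apply Continuous.sub
      · refine Continuous.mul (hS12c.mul (Continuous.inv₀ ?_ ?_)) continuous_const
        · exact continuous_const.add ((hS13c.inv₀ fun x => (hS13pos x).ne').mul hS12c)
        · intro x
          have h1 := hS12pos x
          have h2 := hS13pos x
          have h3 : 0 < (S13 x)⁻¹ * S12 x := mul_pos (inv_pos.mpr h2) h1
          exact (by linarith : (0:ℝ) < 1 + (S13 x)⁻¹ * S12 x).ne'
      · exact hD.mul hv1
    exact hvalc.prodMk hderc
end

section
/- Let M be a real symmetric N×N matrix (N ≥ 2). Suppose v*_1,…,v*_{N−1} is an orthonormal basis of ℝ^{N−1}, λ_1,…,λ_{N−1} are real numbers, and α_1,…,α_{N−1} are real numbers such that, setting v_i := (α_i, v*_i) ∈ ℝ^N, one has M·v_i = λ_i·(0, v*_i) for every i = 1,…,N−1. Then 𝐧(M) = sgn(M_{11}) + Σ_{i=1}^{N−1} sgn(λ_i); in particular n_+(M) = #{i : λ_i > 0} + [M_{11} > 0], n_0(M) = #{i : λ_i = 0} + [M_{11} = 0], and n_−(M) = #{i : λ_i < 0} + [M_{11} < 0]. -/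
open Set Filter Topology MeasureTheory Matrix Function

attribute [local instance] Classical.propDecidable

namespace S16

variable {m : Type*} [Fintype m] [DecidableEq m]

def QF (M : Matrix m m ℝ) (x : m → ℝ) : ℝ := x ⬝ᵥ M *ᵥ x

lemma sum_dotProduct' {ι : Type*} (s : Finset ι) (f : ι → m → ℝ) (v : m → ℝ) :
    (∑ i ∈ s, f i) ⬝ᵥ v = ∑ i ∈ s, f i ⬝ᵥ v := by
  simp only [dotProduct, Finset.sum_apply, Finset.sum_mul]
  rw [Finset.sum_comm]

lemma dotProduct_sum' {ι : Type*} (s : Finset ι) (v : m → ℝ) (f : ι → m → ℝ) :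
    v ⬝ᵥ (∑ i ∈ s, f i) = ∑ i ∈ s, v ⬝ᵥ f i := by
  simp only [dotProduct, Finset.sum_apply, Finset.mul_sum]
  rw [Finset.sum_comm]

lemma mulVec_sum' {ι : Type*} (s : Finset ι) (M : Matrix m m ℝ) (f : ι → m → ℝ) :
    M *ᵥ (∑ i ∈ s, f i) = ∑ i ∈ s, M *ᵥ f i := by
  funext j
  simp only [Matrix.mulVec, dotProduct, Finset.sum_apply, Finset.mul_sum]
  rw [Finset.sum_comm]

lemma orth_li {u : m → (m → ℝ)} (horth : ∀ k l, u k ⬝ᵥ u l = if k = l then (1:ℝ) else 0) :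
    LinearIndependent ℝ u := by
  rw [Fintype.linearIndependent_iff]
  intro g hg j
  have h := congrArg (fun x => x ⬝ᵥ u j) hg
  simp only [zero_dotProduct] at h
  rw [sum_dotProduct'] at h
  simpa [smul_dotProduct, horth, Finset.sum_ite_eq', mul_ite] using h

lemma QF_sum {M : Matrix m m ℝ} {u : m → (m → ℝ)} {μ : m → ℝ}
    (horth : ∀ k l, u k ⬝ᵥ u l = if k = l then (1:ℝ) else 0)
    (heig : ∀ k, M *ᵥ u k = μ k • u k)
    {ι : Type*} [Fintype ι] [DecidableEq ι] (e : ι → m) (he : Function.Injective e) (c : ι → ℝ) :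
    QF M (∑ i, c i • u (e i)) = ∑ i, μ (e i) * c i ^ 2 := by
  unfold QF
  have h1 : M *ᵥ (∑ i, c i • u (e i)) = ∑ j, (c j * μ (e j)) • u (e j) := by
    rw [mulVec_sum']
    refine Finset.sum_congr rfl fun j _ => ?_
    rw [Matrix.mulVec_smul, heig, smul_smul]
  rw [h1, sum_dotProduct']
  simp only [smul_dotProduct, dotProduct_sum', dotProduct_smul,
    horth, he.eq_iff, smul_eq_mul, mul_ite, mul_one, mul_zero]
  refine Finset.sum_congr rfl fun i _ => ?_
  rw [Finset.sum_ite_eq]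
  simp; ring

def PosOn (M : Matrix m m ℝ) (W : Submodule ℝ (m → ℝ)) : Prop :=
  ∀ x ∈ W, x ≠ 0 → 0 < QF M x

lemma posdim_le {M : Matrix m m ℝ} {u : m → (m → ℝ)} {μ : m → ℝ}
    (horth : ∀ k l, u k ⬝ᵥ u l = if k = l then (1:ℝ) else 0)
    (heig : ∀ k, M *ᵥ u k = μ k • u k)
    {W : Submodule ℝ (m → ℝ)} (hW : PosOn M W) :
    Module.finrank ℝ W ≤ (Finset.univ.filter fun k => 0 < μ k).card := by
  classical
  by_contra hlt
  push_neg at hlt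
  set p := (Finset.univ.filter fun k => 0 < μ k).card with hp
  set S := Submodule.span ℝ (Set.range fun k : {k : m // ¬ 0 < μ k} => u k.1) with hSdef
  have hli : LinearIndependent ℝ (fun k : {k : m // ¬ 0 < μ k} => u k.1) :=
    (orth_li horth).comp _ Subtype.val_injective
  have hS : Module.finrank ℝ S = Fintype.card {k : m // ¬ 0 < μ k} :=
    finrank_span_eq_card hli
  have hcard : Fintype.card {k : m // ¬ 0 < μ k} = Fintype.card m - p := by
    rw [Fintype.card_subtype]
    rw [show (Finset.univ.filter fun k => ¬ 0 < μ k)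
        = Finset.univ \ (Finset.univ.filter fun k => 0 < μ k) from Finset.filter_not _ _,
      Finset.card_sdiff_of_subset (Finset.filter_subset _ _), Finset.card_univ]
  have hple : p ≤ Fintype.card m := by
    rw [hp]; exact (Finset.card_filter_le _ _).trans (by simp)
  have hsum := Submodule.finrank_sup_add_finrank_inf_eq W S
  have hle : Module.finrank ℝ ↥(W ⊔ S) ≤ Fintype.card m :=
    (Submodule.finrank_le _).trans (by rw [Module.finrank_fintype_fun_eq_card])
  have hpos : 0 < Module.finrank ℝ ↥(W ⊓ S) := by omega
  have hne : (W ⊓ S) ≠ ⊥ := by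
    intro h
    rw [h, finrank_bot] at hpos
    exact lt_irrefl 0 hpos
  obtain ⟨x, hx, hx0⟩ := Submodule.exists_mem_ne_zero_of_ne_bot hne
  obtain ⟨c, hc⟩ := (Submodule.mem_span_range_iff_exists_fun ℝ).mp (hx.2 : x ∈ S)
  have hq : QF M x = ∑ k : {k : m // ¬ 0 < μ k}, μ k.1 * c k ^ 2 := by
    rw [← hc]; exact QF_sum horth heig Subtype.val Subtype.val_injective c
  have hq0 : QF M x ≤ 0 := by
    rw [hq]
    exact Finset.sum_nonpos fun k _ =>
      mul_nonpos_iff.mpr (Or.inr ⟨not_lt.mp k.2, sq_nonneg _⟩)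
  exact absurd (hW x hx.1 hx0) (not_lt.mpr hq0)

lemma exists_pos_subspace {M : Matrix m m ℝ} {u : m → (m → ℝ)} {μ : m → ℝ}
    (horth : ∀ k l, u k ⬝ᵥ u l = if k = l then (1:ℝ) else 0)
    (heig : ∀ k, M *ᵥ u k = μ k • u k) :
    ∃ W : Submodule ℝ (m → ℝ), PosOn M W ∧
      Module.finrank ℝ W = (Finset.univ.filter fun k => 0 < μ k).card := by
  classical
  refine ⟨Submodule.span ℝ (Set.range fun k : {k : m // 0 < μ k} => u k.1), ?_, ?_⟩
  · intro x hx hx0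
    obtain ⟨c, hc⟩ := (Submodule.mem_span_range_iff_exists_fun ℝ).mp hx
    have hq : QF M x = ∑ k : {k : m // 0 < μ k}, μ k.1 * c k ^ 2 := by
      rw [← hc]; exact QF_sum horth heig Subtype.val Subtype.val_injective c
    have hnn : (0:ℝ) ≤ ∑ k : {k : m // 0 < μ k}, μ k.1 * c k ^ 2 :=
      Finset.sum_nonneg fun k _ => mul_nonneg (le_of_lt k.2) (sq_nonneg _)
    rcases lt_or_eq_of_le hnn with h | h
    · rw [hq]; exact h
    · exfalso
      apply hx0
      have hall : ∀ k ∈ (Finset.univ : Finset {k : m // 0 < μ k}), μ k.1 * c k ^ 2 = 0 :=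
        (Finset.sum_eq_zero_iff_of_nonneg fun k _ =>
          mul_nonneg (le_of_lt k.2) (sq_nonneg _)).mp h.symm
      have hc0 : ∀ k : {k : m // 0 < μ k}, c k = 0 := fun k => by
        have := hall k (Finset.mem_univ _)
        have := mul_eq_zero.mp this
        rcases this with h | h
        · exact absurd h (ne_of_gt k.2)
        · exact pow_eq_zero_iff (by norm_num) |>.mp h
      rw [← hc]
      simp [hc0]
  · have hli : LinearIndependent ℝ (fun k : {k : m // 0 < μ k} => u k.1) :=
      (orth_li horth).comp _ Subtype.val_injective
    rw [finrank_span_eq_card hli, Fintype.card_subtype]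

lemma QF_congr {M : Matrix m m ℝ} (P : Matrix m m ℝ) (y : m → ℝ) :
    QF (Pᵀ * M * P) y = QF M (P *ᵥ y) := by
  unfold QF
  rw [Matrix.mul_assoc, ← Matrix.mulVec_mulVec, ← Matrix.mulVec_mulVec,
    Matrix.dotProduct_mulVec, Matrix.vecMul_transpose]

lemma pcount_le_of_congr {M M' P : Matrix m m ℝ} (hP : IsUnit P) (hM' : M' = Pᵀ * M * P)
    {u u' : m → (m → ℝ)} {μ μ' : m → ℝ}
    (horth : ∀ k l, u k ⬝ᵥ u l = if k = l then (1:ℝ) else 0)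
    (heig : ∀ k, M *ᵥ u k = μ k • u k)
    (horth' : ∀ k l, u' k ⬝ᵥ u' l = if k = l then (1:ℝ) else 0)
    (heig' : ∀ k, M' *ᵥ u' k = μ' k • u' k) :
    (Finset.univ.filter fun k => 0 < μ' k).card
      ≤ (Finset.univ.filter fun k => 0 < μ k).card := by
  obtain ⟨W', hW', hrk⟩ := exists_pos_subspace horth' heig'
  have := hP.invertible
  let e : (m → ℝ) ≃ₗ[ℝ] (m → ℝ) := P.toLinearEquiv' this
  have heapp : ∀ y, e y = P *ᵥ y := fun y => by
    simp [e, Matrix.toLinearEquiv', Matrix.toLin'_apply]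
  set W := W'.map (e : (m → ℝ) →ₗ[ℝ] (m → ℝ)) with hWdef
  have hfr : Module.finrank ℝ W = Module.finrank ℝ W' := LinearEquiv.finrank_map_eq e W'
  have hWpos : PosOn M W := by
    intro x hx hx0
    obtain ⟨y, hyW', hyx⟩ := Submodule.mem_map.mp hx
    have hyx2 : P *ᵥ y = x := by rw [← hyx, LinearEquiv.coe_coe, heapp]
    have hy0 : y ≠ 0 := by
      intro h; apply hx0; rw [← hyx2, h, Matrix.mulVec_zero]
    have : QF M x = QF M' y := by
      rw [← hyx2, ← QF_congr, ← hM']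
    rw [this]
    exact hW' y hyW' hy0
  calc (Finset.univ.filter fun k => 0 < μ' k).card = Module.finrank ℝ W := by rw [hfr, hrk]
    _ ≤ _ := posdim_le horth heig hWpos

lemma pcount_eq_of_congr {M M' P : Matrix m m ℝ} (hP : IsUnit P) (hM' : M' = Pᵀ * M * P)
    {u u' : m → (m → ℝ)} {μ μ' : m → ℝ}
    (horth : ∀ k l, u k ⬝ᵥ u l = if k = l then (1:ℝ) else 0)
    (heig : ∀ k, M *ᵥ u k = μ k • u k)
    (horth' : ∀ k l, u' k ⬝ᵥ u' l = if k = l then (1:ℝ) else 0)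
    (heig' : ∀ k, M' *ᵥ u' k = μ' k • u' k) :
    (Finset.univ.filter fun k => 0 < μ' k).card
      = (Finset.univ.filter fun k => 0 < μ k).card := by
  have hdet : IsUnit P.det := (Matrix.isUnit_iff_isUnit_det P).mp hP
  have h1 : P * P⁻¹ = 1 := Matrix.mul_nonsing_inv P hdet
  have h2 : P⁻¹ * P = 1 := Matrix.nonsing_inv_mul P hdet
  have hPinv : IsUnit (P⁻¹) := ⟨⟨P⁻¹, P, h2, h1⟩, rfl⟩
  have hMM : M = (P⁻¹)ᵀ * M' * P⁻¹ := by
    rw [hM']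
    have ht : (P⁻¹)ᵀ * Pᵀ = 1 := by rw [← Matrix.transpose_mul, h1, Matrix.transpose_one]
    calc M = ((P⁻¹)ᵀ * Pᵀ) * M * (P * P⁻¹) := by rw [ht, h1, Matrix.one_mul, Matrix.mul_one]
      _ = (P⁻¹)ᵀ * (Pᵀ * M * P) * P⁻¹ := by simp only [Matrix.mul_assoc]
  exact le_antisymm (pcount_le_of_congr hP hM' horth heig horth' heig')
    (pcount_le_of_congr hPinv hMM horth' heig' horth heig)

lemma filter_neg_pos (μ : m → ℝ) :
    (Finset.univ.filter fun k => 0 < (-μ) k) = (Finset.univ.filter fun k => μ k < 0) := by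
  ext k
  simp [neg_pos]

lemma tri_count (μ : m → ℝ) :
    (Finset.univ.filter fun k => 0 < μ k).card + (Finset.univ.filter fun k => μ k = 0).card
      + (Finset.univ.filter fun k => μ k < 0).card = Fintype.card m := by
  classical
  have h1 : ∀ k : m, ((if 0 < μ k then 1 else 0) + (if μ k = 0 then 1 else 0))
      + (if μ k < 0 then 1 else 0) = (1:ℕ) := by
    intro k
    rcases lt_trichotomy (μ k) 0 with h | h | h
    · simp [h, not_lt.mpr h.le, h.ne]
    · simp [h]
    · simp [h, h.ne', not_lt.mpr h.le]
  rw [Finset.card_filter, Finset.card_filter, Finset.card_filter,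
    ← Finset.sum_add_distrib, ← Finset.sum_add_distrib,
    Finset.sum_congr rfl fun k _ => h1 k]
  simp

lemma allcounts_of_congr {M M' P : Matrix m m ℝ} (hP : IsUnit P) (hM' : M' = Pᵀ * M * P)
    {u u' : m → (m → ℝ)} {μ μ' : m → ℝ}
    (horth : ∀ k l, u k ⬝ᵥ u l = if k = l then (1:ℝ) else 0)
    (heig : ∀ k, M *ᵥ u k = μ k • u k)
    (horth' : ∀ k l, u' k ⬝ᵥ u' l = if k = l then (1:ℝ) else 0)
    (heig' : ∀ k, M' *ᵥ u' k = μ' k • u' k) :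
    (Finset.univ.filter fun k => 0 < μ' k).card
        = (Finset.univ.filter fun k => 0 < μ k).card ∧
    (Finset.univ.filter fun k => μ' k = 0).card
        = (Finset.univ.filter fun k => μ k = 0).card ∧
    (Finset.univ.filter fun k => μ' k < 0).card
        = (Finset.univ.filter fun k => μ k < 0).card := by
  have hpos := pcount_eq_of_congr hP hM' horth heig horth' heig'
  have hnegM : ∀ k, (-M) *ᵥ u k = (-μ) k • u k := fun k => by
    rw [Matrix.neg_mulVec, heig]; simp
  have hnegM' : ∀ k, (-M') *ᵥ u' k = (-μ') k • u' k := fun k => by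
    rw [Matrix.neg_mulVec, heig']; simp
  have hMneg : (-M') = Pᵀ * (-M) * P := by rw [hM']; simp [Matrix.mul_neg, Matrix.neg_mul]
  have hneg := pcount_eq_of_congr hP hMneg horth hnegM horth' hnegM'
  rw [filter_neg_pos, filter_neg_pos] at hneg
  refine ⟨hpos, ?_, hneg⟩
  have t1 := tri_count μ
  have t2 := tri_count μ'
  omega

end S16


lemma sgn3_cases (x : ℝ) :
    (0 < x → sgn3 x = (1,0,0)) ∧ (x = 0 → sgn3 x = (0,1,0)) ∧ (x < 0 → sgn3 x = (0,0,1)) := by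
  refine ⟨fun h => ?_, fun h => ?_, fun h => ?_⟩ <;> unfold sgn3
  · rw [if_pos h]
  · rw [if_neg (by linarith), if_pos h]
  · rw [if_neg (by linarith), if_neg (by linarith)]

lemma sgn3_fst (x : ℝ) : (sgn3 x).1 = if 0 < x then 1 else 0 := by
  rcases lt_trichotomy x 0 with h | h | h
  · rw [(sgn3_cases x).2.2 h, if_neg (by linarith)]
  · rw [(sgn3_cases x).2.1 h, if_neg (by linarith)]
  · rw [(sgn3_cases x).1 h, if_pos h]

lemma sgn3_zmid (x : ℝ) : (sgn3 x).2.1 = if x = 0 then 1 else 0 := by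
  rcases lt_trichotomy x 0 with h | h | h
  · rw [(sgn3_cases x).2.2 h, if_neg (by linarith)]
  · rw [(sgn3_cases x).2.1 h, if_pos h]
  · rw [(sgn3_cases x).1 h, if_neg (by linarith)]

lemma sgn3_neg' (x : ℝ) : (sgn3 x).2.2 = if x < 0 then 1 else 0 := by
  rcases lt_trichotomy x 0 with h | h | h
  · rw [(sgn3_cases x).2.2 h, if_pos h]
  · rw [(sgn3_cases x).2.1 h, if_neg (by linarith)]
  · rw [(sgn3_cases x).1 h, if_neg (by linarith)]

/-- if `M` is a real symmetric `N×N` matrix (`N = n+1 ≥ 2`), `v*₁,…,v*ₙ` an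
orthonormal basis of `ℝⁿ`, and `M·(αᵢ, v*ᵢ) = λᵢ·(0, v*ᵢ)` for all `i`, then
`𝐧(M) = sgn(M₁₁) + Σᵢ sgn(λᵢ)`, with the componentwise consequences for `n₊, n₀, n₋`. -/
theorem statement16 {n : ℕ} (hn : 1 ≤ n) (M : Matrix (Fin (n+1)) (Fin (n+1)) ℝ)
    (hM : M.IsSymm)
    (vstar : Fin n → (Fin n → ℝ))
    (horth : ∀ i j, (∑ t, vstar i t * vstar j t) = if i = j then (1:ℝ) else 0)
    (lam : Fin n → ℝ) (α : Fin n → ℝ)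
    (heig : ∀ i, M.mulVec (Fin.cons (α i) (vstar i) : Fin (n+1) → ℝ)
        = lam i • (Fin.cons 0 (vstar i) : Fin (n+1) → ℝ)) :
    inertia M = sgn3 (M 0 0) + ∑ i, sgn3 (lam i) ∧
    (inertia M).1
      = (Finset.univ.filter fun i => 0 < lam i).card + (if 0 < M 0 0 then 1 else 0) ∧
    (inertia M).2.1
      = (Finset.univ.filter fun i => lam i = 0).card + (if M 0 0 = 0 then 1 else 0) ∧
    (inertia M).2.2
      = (Finset.univ.filter fun i => lam i < 0).card + (if M 0 0 < 0 then 1 else 0) := by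
  classical
  have hMt : Mᵀ = M := hM
  have hH : M.IsHermitian := by
    rw [Matrix.IsHermitian, Matrix.conjTranspose_eq_transpose_of_trivial]; exact hMt
  have horthu : ∀ k l, (⇑(hH.eigenvectorBasis k) : Fin (n+1) → ℝ) ⬝ᵥ ⇑(hH.eigenvectorBasis l)
      = if k = l then (1:ℝ) else 0 := by
    intro k l
    have h := orthonormal_iff_ite.mp hH.eigenvectorBasis.orthonormal k l
    simpa [PiLp.inner_apply, RCLike.inner_apply, dotProduct, mul_comm] using h
  have heigu : ∀ k, M *ᵥ (⇑(hH.eigenvectorBasis k) : Fin (n+1) → ℝ)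
      = hH.eigenvalues k • ⇑(hH.eigenvectorBasis k) := fun k => hH.mulVec_eigenvectorBasis k
  set d : Fin (n+1) → ℝ := Fin.cons (M 0 0) lam with hd
  set col : Fin (n+1) → (Fin (n+1) → ℝ) :=
    Fin.cons (Pi.single 0 1) (fun i => Fin.cons (α i) (vstar i)) with hcol
  have horthv : ∀ i j, vstar i ⬝ᵥ vstar j = if i = j then (1:ℝ) else 0 := fun i j => horth i j
  have hsym : ∀ a b : Fin (n+1) → ℝ, a ⬝ᵥ M *ᵥ b = b ⬝ᵥ M *ᵥ a := by
    intro a b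
    rw [Matrix.dotProduct_mulVec, ← Matrix.mulVec_transpose, hMt, dotProduct_comm]
  have hMcol : ∀ i : Fin n, M *ᵥ col i.succ = lam i • (Fin.cons 0 (vstar i) : Fin (n+1) → ℝ) := by
    intro i
    have h1 : col i.succ = Fin.cons (α i) (vstar i) := by rw [hcol, Fin.cons_succ]
    rw [h1]; exact heig i
  have hd0 : ∀ y : Fin (n+1) → ℝ, (Pi.single 0 1 : Fin (n+1) → ℝ) ⬝ᵥ y = y 0 := by
    intro y
    simp [dotProduct, Pi.single_apply]
  have hcons_dot : ∀ i j, (Fin.cons (α i) (vstar i) : Fin (n+1) → ℝ) ⬝ᵥ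
      (Fin.cons 0 (vstar j) : Fin (n+1) → ℝ) = if i = j then (1:ℝ) else 0 := by
    intro i j
    rw [show (Fin.cons (α i) (vstar i) : Fin (n+1) → ℝ) ⬝ᵥ (Fin.cons 0 (vstar j))
        = α i * 0 + ∑ t, vstar i t * vstar j t from by
      simp [dotProduct, Fin.sum_univ_succ]]
    rw [mul_zero, zero_add]
    exact horth i j
  have hdot : ∀ k l, col k ⬝ᵥ (M *ᵥ col l) = Matrix.diagonal d k l := by
    have hbase : ∀ j : Fin n, col 0 ⬝ᵥ (M *ᵥ col j.succ) = 0 := by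
      intro j
      rw [hMcol j, show col 0 = (Pi.single 0 1 : Fin (n+1) → ℝ) from by rw [hcol, Fin.cons_zero],
        hd0]
      simp
    intro k l
    induction k using Fin.cases with
    | zero =>
      induction l using Fin.cases with
      | zero =>
        rw [show col 0 = (Pi.single 0 1 : Fin (n+1) → ℝ) from by rw [hcol, Fin.cons_zero], hd0]
        simp [Matrix.mulVec, dotProduct, Pi.single_apply, hd]
      | succ j =>
        rw [hbase j, Matrix.diagonal_apply_ne _ (by exact (Fin.succ_ne_zero j).symm)]
    | succ i =>
      induction l using Fin.cases with
      | zero =>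
        rw [hsym, hbase i, Matrix.diagonal_apply_ne _ (by exact Fin.succ_ne_zero i)]
      | succ j =>
        rw [hMcol j, dotProduct_smul,
          show col i.succ = Fin.cons (α i) (vstar i) from by rw [hcol, Fin.cons_succ], hcons_dot]
        by_cases h : i = j
        · subst h
          simp [Matrix.diagonal_apply_eq, hd, Fin.cons_succ]
        · simp [h, Matrix.diagonal_apply_ne _ (fun hc => h (Fin.succ_injective _ hc))]
  set P : Matrix (Fin (n+1)) (Fin (n+1)) ℝ := Matrix.of (fun r c => col c r) with hP
  have hentry : Matrix.diagonal d = Pᵀ * M * P := by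
    ext k l
    rw [← hdot k l]
    simp only [Matrix.mul_apply, Matrix.mulVec, dotProduct, Matrix.transpose_apply, hP,
      Matrix.of_apply, Finset.mul_sum, Finset.sum_mul]
    rw [Finset.sum_comm]
    exact Finset.sum_congr rfl fun r _ => Finset.sum_congr rfl fun s _ => by ring
  have hliv : LinearIndependent ℝ vstar := S16.orth_li horthv
  have hlicol : LinearIndependent ℝ col := by
    rw [Fintype.linearIndependent_iff]
    intro g hg
    have happ : ∀ t : Fin (n+1), (∑ k, g k * col k t) = 0 := by
      intro t
      have h := congrFun hg t
      simpa [Finset.sum_apply] using h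
    have htail : ∀ i : Fin n, g i.succ = 0 := by
      have hsumv : (∑ i : Fin n, (fun i => g i.succ) i • vstar i) = 0 := by
        funext t
        have h := happ t.succ
        rw [Fin.sum_univ_succ] at h
        simpa [hcol, Fin.cons_zero, Fin.cons_succ,
          Pi.single_eq_of_ne (Fin.succ_ne_zero t), Finset.sum_apply] using h
      exact fun i => Fintype.linearIndependent_iff.mp hliv _ hsumv i
    have h0 : g 0 = 0 := by
      have h := happ 0
      rw [Fin.sum_univ_succ] at h
      simpa [hcol, Fin.cons_zero, Fin.cons_succ, Pi.single_eq_same, htail] using h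
    intro k
    induction k using Fin.cases with
    | zero => exact h0
    | succ i => exact htail i
  have hUnitPT : IsUnit Pᵀ := by
    rw [← Matrix.linearIndependent_rows_iff_isUnit]
    have hrows : Pᵀ.row = col := funext fun k => rfl
    rw [hrows]
    exact hlicol
  have hUnitP : IsUnit P := by
    rwa [Matrix.isUnit_transpose] at hUnitPT
  have horthw : ∀ k l : Fin (n+1), (Pi.single k 1 : Fin (n+1) → ℝ) ⬝ᵥ Pi.single l 1
      = if k = l then (1:ℝ) else 0 := by
    intro k l
    rw [show (Pi.single k 1 : Fin (n+1) → ℝ) ⬝ᵥ Pi.single l 1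
        = ∑ t, (if t = k then (1:ℝ) else 0) * (if t = l then (1:ℝ) else 0) from by
      simp [dotProduct, Pi.single_apply]]
    by_cases h : k = l
    · subst h
      rw [if_pos rfl]
      rw [Finset.sum_eq_single k (fun t _ ht => by rw [if_neg ht, zero_mul]) (by simp)]
      simp
    · rw [if_neg h]
      refine Finset.sum_eq_zero fun t _ => ?_
      by_cases h1 : t = k
      · subst h1; rw [if_neg h, mul_zero]
      · rw [if_neg h1, zero_mul]
  have heigw : ∀ k, (Matrix.diagonal d) *ᵥ (Pi.single k 1 : Fin (n+1) → ℝ)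
      = d k • (Pi.single k 1 : Fin (n+1) → ℝ) := by
    intro k
    rw [Matrix.diagonal_mulVec_single]
    funext t
    by_cases h : t = k <;> simp [h, Pi.single_apply]
  obtain ⟨cpos, czero, cneg⟩ := S16.allcounts_of_congr hUnitP hentry horthu heigu horthw heigw
  have hinert : inertia M = ((Finset.univ.filter fun i => 0 < hH.eigenvalues i).card,
      (Finset.univ.filter fun i => hH.eigenvalues i = 0).card,
      (Finset.univ.filter fun i => hH.eigenvalues i < 0).card) := dif_pos hH
  have hsplit : ∀ (p : ℝ → Prop), (Finset.univ.filter fun k => p (d k)).card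
      = (if p (M 0 0) then 1 else 0) + (Finset.univ.filter fun i => p (lam i)).card := by
    intro p
    rw [Finset.card_filter, Finset.card_filter, Fin.sum_univ_succ]
    simp [hd, Fin.cons_zero, Fin.cons_succ]
  have e1 : (inertia M).1
      = (Finset.univ.filter fun i => 0 < lam i).card + (if 0 < M 0 0 then 1 else 0) := by
    rw [hinert]
    show (Finset.univ.filter fun i => 0 < hH.eigenvalues i).card = _
    rw [← cpos, hsplit (fun x => 0 < x), add_comm]
  have e2 : (inertia M).2.1
      = (Finset.univ.filter fun i => lam i = 0).card + (if M 0 0 = 0 then 1 else 0) := by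
    rw [hinert]
    show (Finset.univ.filter fun i => hH.eigenvalues i = 0).card = _
    rw [← czero, hsplit (fun x => x = 0), add_comm]
  have e3 : (inertia M).2.2
      = (Finset.univ.filter fun i => lam i < 0).card + (if M 0 0 < 0 then 1 else 0) := by
    rw [hinert]
    show (Finset.univ.filter fun i => hH.eigenvalues i < 0).card = _
    rw [← cneg, hsplit (fun x => x < 0), add_comm]
  refine ⟨?_, e1, e2, e3⟩
  refine Prod.ext ?_ (Prod.ext ?_ ?_)
  · rw [e1, Prod.fst_add, Prod.fst_sum, sgn3_fst,
      Finset.sum_congr rfl (fun i _ => sgn3_fst (lam i)), Finset.card_filter]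
    exact add_comm _ _
  · rw [show ((sgn3 (M 0 0) + ∑ i, sgn3 (lam i)).2.1)
        = (sgn3 (M 0 0)).2.1 + (∑ i, sgn3 (lam i)).2.1 from by
      rw [Prod.snd_add, Prod.fst_add], e2, sgn3_zmid, Prod.snd_sum, Prod.fst_sum,
      Finset.sum_congr rfl (fun i _ => sgn3_zmid (lam i)), Finset.card_filter]
    exact add_comm _ _
  · rw [show ((sgn3 (M 0 0) + ∑ i, sgn3 (lam i)).2.2)
        = (sgn3 (M 0 0)).2.2 + (∑ i, sgn3 (lam i)).2.2 from by
      rw [Prod.snd_add, Prod.snd_add], e3, sgn3_neg', Prod.snd_sum, Prod.snd_sum,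
      Finset.sum_congr rfl (fun i _ => sgn3_neg' (lam i)), Finset.card_filter]
    exact add_comm _ _
end

section
/- Let G = (V,E) be a graph with at least one edge, with interaction laws f_ij = f_ji ∈ 𝓕, and let p ∈ P be a configuration with all agents on the a-axis at coordinates a = (a_1,…,a_N). Then in the coordinates (a_1,…,a_N, b_1,…,b_N), the Hessian of Φ at p equals the block-diagonal matrix −diag(d̃F_p, F_p). If moreover p is an equilibrium, then the three vectors t_a = (e, 0), t_b = (0, e) and r_p = (0, a), where e = (1,…,1), lie in the kernel of this Hessian, so it has at least three zero eigenvalues; and the critical orbit O_p is nondegenerate if and only if the kernel of d̃F_p is spanned by e and the kernel of F_p is spanned by e and a. -/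
open Set Filter Topology MeasureTheory Matrix Function

attribute [local instance] Classical.propDecidable

namespace S17aux

lemma sq_pos {u : ℝ × ℝ} (h : u ≠ 0) : 0 < u.1^2 + u.2^2 := by
  rcases eq_or_ne u.1 0 with h1 | h1
  · have h2 : u.2 ≠ 0 := fun h2 => h (Prod.ext_iff.mpr ⟨h1, h2⟩)
    have : 0 < u.2 ^ 2 := by positivity
    nlinarith [sq_nonneg u.1]
  · have : 0 < u.1 ^ 2 := by positivity
    nlinarith [sq_nonneg u.2]

lemma hasFDerivAt_norm2 {u0 : ℝ × ℝ} (h : u0 ≠ 0) :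
    HasFDerivAt (fun u : ℝ × ℝ => Real.sqrt (u.1^2 + u.2^2))
      ((u0.1 / Real.sqrt (u0.1^2 + u0.2^2)) • ContinuousLinearMap.fst ℝ ℝ ℝ
        + (u0.2 / Real.sqrt (u0.1^2 + u0.2^2)) • ContinuousLinearMap.snd ℝ ℝ ℝ) u0 := by
  have hs : 0 < u0.1^2 + u0.2^2 := sq_pos h
  have hsq : HasFDerivAt (fun u : ℝ × ℝ => u.1^2 + u.2^2)
      ((2*u0.1) • ContinuousLinearMap.fst ℝ ℝ ℝ + (2*u0.2) • ContinuousLinearMap.snd ℝ ℝ ℝ) u0 := by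
    have h1 : HasFDerivAt (fun u : ℝ × ℝ => u.1) (ContinuousLinearMap.fst ℝ ℝ ℝ) u0 := hasFDerivAt_fst
    have h2 : HasFDerivAt (fun u : ℝ × ℝ => u.2) (ContinuousLinearMap.snd ℝ ℝ ℝ) u0 := hasFDerivAt_snd
    have := ((h1.mul h1).add (h2.mul h2))
    convert this using 1 <;> try rfl
    · funext u; show u.1^2 + u.2^2 = u.1*u.1 + u.2*u.2; ring
    · ext w <;> simp <;> ring
  have hsqrt : HasDerivAt Real.sqrt (1 / (2 * Real.sqrt (u0.1^2 + u0.2^2))) (u0.1^2 + u0.2^2) :=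
    Real.hasDerivAt_sqrt hs.ne'
  have := hsqrt.comp_hasFDerivAt u0 hsq
  convert this using 1 <;> try rfl
  have hr : Real.sqrt (u0.1^2 + u0.2^2) ≠ 0 := (Real.sqrt_pos.mpr hs).ne'
  ext w <;> simp <;> field_simp <;> ring

lemma hasDerivAt_psi (f : ℝ → ℝ) (hf : ContinuousOn f (Set.Ioi 0)) {d : ℝ} (hd : 0 < d) :
    HasDerivAt (fun t => ∫ x in (1:ℝ)..t, x * f x) (d * f d) d := by
  have hcont : ContinuousOn (fun x => x * f x) (Set.Ioi 0) :=
    (continuousOn_id.mul hf)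
  have hsub : Set.uIcc (1:ℝ) d ⊆ Set.Ioi 0 := by
    intro x hx
    have := hx.1
    simp only [Set.mem_Ioi]
    have h1 : min 1 d ≤ x := hx.1
    have : (0:ℝ) < min 1 d := lt_min one_pos hd
    linarith
  have hint : IntervalIntegrable (fun x => x * f x) volume 1 d :=
    (hcont.mono hsub).intervalIntegrable
  have hmeas : StronglyMeasurableAtFilter (fun x => x * f x) (𝓝 d) volume :=
    ContinuousOn.stronglyMeasurableAtFilter isOpen_Ioi hcont d hd
  have hca : ContinuousAt (fun x => x * f x) d := hcont.continuousAt (Ioi_mem_nhds hd)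
  exact intervalIntegral.integral_hasDerivAt_right hint hmeas hca


end S17aux

namespace S17aux

/-- first derivative of the edge potential `u ↦ ψ(‖u‖)`. -/
lemma key0 (f : ℝ → ℝ) (hf : ContinuousOn f (Set.Ioi 0)) {u0 : ℝ × ℝ} (h : u0 ≠ 0) :
    HasFDerivAt (fun u : ℝ × ℝ => ∫ x in (1:ℝ)..Real.sqrt (u.1^2 + u.2^2), x * f x)
      ((f (Real.sqrt (u0.1^2 + u0.2^2)) * u0.1) • ContinuousLinearMap.fst ℝ ℝ ℝ
        + (f (Real.sqrt (u0.1^2 + u0.2^2)) * u0.2) • ContinuousLinearMap.snd ℝ ℝ ℝ) u0 := by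
  have hs : 0 < u0.1^2 + u0.2^2 := sq_pos h
  set r := Real.sqrt (u0.1^2 + u0.2^2) with hr
  have hrpos : 0 < r := Real.sqrt_pos.mpr hs
  have h1 := hasDerivAt_psi f hf hrpos
  have h2 := hasFDerivAt_norm2 h
  have := h1.comp_hasFDerivAt u0 h2
  convert this using 1 <;> try rfl
  ext w <;> simp <;> field_simp <;> ring

/-- second-derivative building block: derivative of `u ↦ f(‖u‖) * u.1` at `(t,0)`. -/
lemma key1 (f : ℝ → ℝ) (hf : ContDiffOn ℝ 1 f (Set.Ioi 0)) {t : ℝ} (ht : t ≠ 0) :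
    HasFDerivAt (fun u : ℝ × ℝ => f (Real.sqrt (u.1^2 + u.2^2)) * u.1)
      ((deriv (tildeFn f) |t|) • ContinuousLinearMap.fst ℝ ℝ ℝ) ((t, 0) : ℝ × ℝ) := by
  have hr : (0:ℝ) < |t| := abs_pos.mpr ht
  have hne : ((t, 0) : ℝ × ℝ) ≠ 0 := by simp [Prod.ext_iff, ht]
  have hdf : DifferentiableAt ℝ f |t| :=
    ((hf.differentiableOn one_ne_zero).differentiableAt (Ioi_mem_nhds hr))
  have hfd : HasDerivAt f (deriv f |t|) |t| := hdf.hasDerivAt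
  have hn := hasFDerivAt_norm2 hne
  have hval : Real.sqrt ((t:ℝ)^2 + (0:ℝ)^2) = |t| := by
    rw [show (t:ℝ)^2 + (0:ℝ)^2 = t^2 by ring, Real.sqrt_sq_eq_abs]
  rw [hval] at hn
  have hfd2 : HasDerivAt f (deriv f |t|)
      (Real.sqrt (((t,0):ℝ×ℝ).1^2 + ((t,0):ℝ×ℝ).2^2)) := by
    rw [show Real.sqrt (((t,0):ℝ×ℝ).1^2 + ((t,0):ℝ×ℝ).2^2) = |t| by simpa using hval]
    exact hfd
  have hcomp := hfd2.comp_hasFDerivAt ((t, 0) : ℝ × ℝ) hn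
  have hfst : HasFDerivAt (fun u : ℝ × ℝ => u.1) (ContinuousLinearMap.fst ℝ ℝ ℝ)
      ((t, 0) : ℝ × ℝ) := hasFDerivAt_fst
  have hmul := hcomp.mul hfst
  have htf : deriv (tildeFn f) |t| = f |t| + |t| * deriv f |t| := by
    have : HasDerivAt (tildeFn f) (1 * f |t| + |t| * deriv f |t|) |t| :=
      (hasDerivAt_id |t|).mul hfd
    simpa using this.deriv
  have haux : f (Real.sqrt ((t:ℝ)^2 + (0:ℝ)^2)) = f |t| := by rw [hval]
  convert hmul using 1 <;> try rfl
  refine ContinuousLinearMap.ext fun w => ?_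
  simp [htf, Real.sqrt_sq_eq_abs]
  rcases abs_cases t with ⟨h1, _⟩ | ⟨h1, _⟩ <;> rw [h1] <;> field_simp [ht] <;> ring

/-- second-derivative building block: derivative of `u ↦ f(‖u‖) * u.2` at `(t,0)`. -/
lemma key2 (f : ℝ → ℝ) (hf : ContDiffOn ℝ 1 f (Set.Ioi 0)) {t : ℝ} (ht : t ≠ 0) :
    HasFDerivAt (fun u : ℝ × ℝ => f (Real.sqrt (u.1^2 + u.2^2)) * u.2)
      ((f |t|) • ContinuousLinearMap.snd ℝ ℝ ℝ) ((t, 0) : ℝ × ℝ) := by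
  have hr : (0:ℝ) < |t| := abs_pos.mpr ht
  have hne : ((t, 0) : ℝ × ℝ) ≠ 0 := by simp [Prod.ext_iff, ht]
  have hdf : DifferentiableAt ℝ f |t| :=
    ((hf.differentiableOn one_ne_zero).differentiableAt (Ioi_mem_nhds hr))
  have hfd : HasDerivAt f (deriv f |t|) |t| := hdf.hasDerivAt
  have hn := hasFDerivAt_norm2 hne
  have hval : Real.sqrt ((t:ℝ)^2 + (0:ℝ)^2) = |t| := by
    rw [show (t:ℝ)^2 + (0:ℝ)^2 = t^2 by ring, Real.sqrt_sq_eq_abs]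
  rw [hval] at hn
  have hfd2 : HasDerivAt f (deriv f |t|)
      (Real.sqrt (((t,0):ℝ×ℝ).1^2 + ((t,0):ℝ×ℝ).2^2)) := by
    rw [show Real.sqrt (((t,0):ℝ×ℝ).1^2 + ((t,0):ℝ×ℝ).2^2) = |t| by simpa using hval]
    exact hfd
  have hcomp := hfd2.comp_hasFDerivAt ((t, 0) : ℝ × ℝ) hn
  have hsnd : HasFDerivAt (fun u : ℝ × ℝ => u.2) (ContinuousLinearMap.snd ℝ ℝ ℝ)
      ((t, 0) : ℝ × ℝ) := hasFDerivAt_snd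
  have hmul := hcomp.mul hsnd
  have haux : f (Real.sqrt ((t:ℝ)^2 + (0:ℝ)^2)) = f |t| := by rw [hval]
  convert hmul using 1 <;> try rfl
  refine ContinuousLinearMap.ext fun w => ?_
  simp [Real.sqrt_sq_eq_abs]

lemma dist2_eq (x y : ℝ × ℝ) : dist2 x y = Real.sqrt ((x - y).1^2 + (x - y).2^2) := rfl

lemma dist2_comm (x y : ℝ × ℝ) : dist2 x y = dist2 y x := by
  unfold dist2
  rw [show (x.1-y.1)^2+(x.2-y.2)^2 = (y.1-x.1)^2+(y.2-x.2)^2 by ring]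

lemma half_double_sum {N : ℕ} (c : Fin N → Fin N → ℝ) (hanti : ∀ i j, c i j = - c j i)
    (k : Fin N) :
    (1/2 : ℝ) * (∑ i, ∑ j, c i j * ((if i = k then (1:ℝ) else 0) - (if j = k then 1 else 0)))
      = ∑ j, c k j := by
  have h1 : ∀ i j : Fin N, c i j * ((if i = k then (1:ℝ) else 0) - (if j = k then 1 else 0))
      = (if i = k then c i j else 0) - (if j = k then c i j else 0) := by
    intro i j; by_cases h : i = k <;> by_cases h' : j = k <;> simp [h, h']
  simp_rw [h1, Finset.sum_sub_distrib]
  have hA : ∑ i : Fin N, ∑ j : Fin N, (if i = k then c i j else 0) = ∑ j, c k j := by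
    rw [Finset.sum_comm]
    simp [Finset.sum_ite_eq, Finset.sum_ite_eq']
  have hB : ∑ i : Fin N, ∑ j : Fin N, (if j = k then c i j else 0) = ∑ i, c i k := by
    simp [Finset.sum_ite_eq, Finset.sum_ite_eq']
  rw [hA, hB]
  have heq : ∑ i : Fin N, c i k = - ∑ j : Fin N, c k j := by
    rw [← Finset.sum_neg_distrib]
    exact Finset.sum_congr rfl fun i _ => hanti i k
  rw [heq]; ring

end S17aux

namespace S17aux

variable {N : ℕ}

/-- coordinate projection as a CLM. -/
noncomputable def prj (i : Fin N) : (Fin N → ℝ × ℝ) →L[ℝ] ℝ × ℝ :=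
  ContinuousLinearMap.proj i

@[simp] lemma prj_apply (i : Fin N) (q : Fin N → ℝ × ℝ) : prj i q = q i := rfl

/-- The derivative CLM of the potential at `q`. -/
noncomputable def DPhi (G : SimpleGraph (Fin N)) (f : Fin N → Fin N → ℝ → ℝ)
    (q : Fin N → ℝ × ℝ) : (Fin N → ℝ × ℝ) →L[ℝ] ℝ :=
  (1/2 : ℝ) • ∑ i, ∑ j,
    if G.Adj i j then
      ((f i j (dist2 (q i) (q j)) * (q i - q j).1) • ContinuousLinearMap.fst ℝ ℝ ℝ
        + (f i j (dist2 (q i) (q j)) * (q i - q j).2) • ContinuousLinearMap.snd ℝ ℝ ℝ).comp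
        (prj i - prj j)
    else 0

lemma hasFDerivAt_sub_coords (i j : Fin N) (q : Fin N → ℝ × ℝ) :
    HasFDerivAt (fun q : Fin N → ℝ × ℝ => q i - q j)
      (prj i - prj j) q := by
  have h := (prj i - prj j : (Fin N → ℝ × ℝ) →L[ℝ] ℝ × ℝ).hasFDerivAt (x := q)
  have heq : ⇑(prj i - prj j : (Fin N → ℝ × ℝ) →L[ℝ] ℝ × ℝ)
      = fun q : Fin N → ℝ × ℝ => q i - q j := by
    funext q; simp [prj]
  rwa [heq] at h

lemma hasFDerivAt_potential (G : SimpleGraph (Fin N)) (f : Fin N → Fin N → ℝ → ℝ)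
    (hF : ∀ i j, G.Adj i j → ContinuousOn (f i j) (Set.Ioi 0))
    {q : Fin N → ℝ × ℝ} (hq : InConfigSpace G q) :
    HasFDerivAt (potential G f) (DPhi G f q) q := by
  have hterm : ∀ i j : Fin N,
      HasFDerivAt (fun q : Fin N → ℝ × ℝ =>
          if G.Adj i j then ∫ x in (1:ℝ)..(dist2 (q i) (q j)), x * f i j x else 0)
        (if G.Adj i j then
          ((f i j (dist2 (q i) (q j)) * (q i - q j).1) • ContinuousLinearMap.fst ℝ ℝ ℝ
            + (f i j (dist2 (q i) (q j)) * (q i - q j).2) • ContinuousLinearMap.snd ℝ ℝ ℝ).comp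
            (prj i - prj j)
        else 0) q := by
    intro i j
    by_cases hadj : G.Adj i j
    · simp only [if_pos hadj]
      have hne : q i - q j ≠ 0 := sub_ne_zero.mpr (hq i j hadj)
      have h0 := key0 (f i j) (hF i j hadj) hne
      have hcomp := h0.comp q (hasFDerivAt_sub_coords i j q)
      convert hcomp using 2 <;> (try rfl) <;> rw [dist2_eq]
    · simp only [if_neg hadj]
      exact hasFDerivAt_const 0 q
  have hsum : HasFDerivAt
      (fun q : Fin N → ℝ × ℝ => ∑ i, ∑ j,
        if G.Adj i j then ∫ x in (1:ℝ)..(dist2 (q i) (q j)), x * f i j x else 0)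
      (∑ i, ∑ j,
        if G.Adj i j then
          ((f i j (dist2 (q i) (q j)) * (q i - q j).1) • ContinuousLinearMap.fst ℝ ℝ ℝ
            + (f i j (dist2 (q i) (q j)) * (q i - q j).2) • ContinuousLinearMap.snd ℝ ℝ ℝ).comp
            (prj i - prj j)
        else 0) q :=
    HasFDerivAt.fun_sum fun i _ => HasFDerivAt.fun_sum fun j _ => hterm i j
  exact hsum.const_mul (1/2 : ℝ)


lemma fderiv_potential_apply_inl (G : SimpleGraph (Fin N)) (f : Fin N → Fin N → ℝ → ℝ)
    (hsym : ∀ i j, f i j = f j i)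
    (hF : ∀ i j, G.Adj i j → ContinuousOn (f i j) (Set.Ioi 0))
    {q : Fin N → ℝ × ℝ} (hq : InConfigSpace G q) (k : Fin N) :
    fderiv ℝ (potential G f) q (basisVec (Sum.inl k))
      = ∑ j, if G.Adj k j then f k j (dist2 (q k) (q j)) * ((q k).1 - (q j).1) else 0 := by
  rw [(hasFDerivAt_potential G f hF hq).fderiv]
  set c : Fin N → Fin N → ℝ := fun i j =>
    if G.Adj i j then f i j (dist2 (q i) (q j)) * ((q i).1 - (q j).1) else 0 with hcdef
  have hanti : ∀ i j, c i j = - c j i := by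
    intro i j
    by_cases hadj : G.Adj i j
    · simp only [hcdef, if_pos hadj, if_pos (hadj.symm)]
      rw [hsym i j, dist2_comm (q i) (q j)]; ring
    · have hadj' : ¬ G.Adj j i := fun h => hadj (h.symm)
      simp [hcdef, hadj, hadj']
  have hc : ∀ i j : Fin N,
      ((if G.Adj i j then
          ((f i j (dist2 (q i) (q j)) * (q i - q j).1) • ContinuousLinearMap.fst ℝ ℝ ℝ
            + (f i j (dist2 (q i) (q j)) * (q i - q j).2) • ContinuousLinearMap.snd ℝ ℝ ℝ).comp
            (prj i - prj j)
        else 0) : (Fin N → ℝ × ℝ) →L[ℝ] ℝ) (basisVec (Sum.inl k))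
      = c i j * ((if i = k then (1:ℝ) else 0) - (if j = k then 1 else 0)) := by
    intro i j
    by_cases hadj : G.Adj i j
    · simp only [hcdef, if_pos hadj, ContinuousLinearMap.comp_apply,
        ContinuousLinearMap.sub_apply, ContinuousLinearMap.add_apply,
        ContinuousLinearMap.smul_apply, ContinuousLinearMap.coe_fst',
        ContinuousLinearMap.coe_snd', prj_apply, basisVec, Sum.elim_inl]
      by_cases hik : i = k <;> by_cases hjk : j = k <;>
        simp [hik, hjk, Pi.single_apply] <;> ring
    · simp [hcdef, hadj]
  unfold DPhi
  rw [ContinuousLinearMap.smul_apply, ContinuousLinearMap.sum_apply]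
  simp_rw [ContinuousLinearMap.sum_apply, hc]
  rw [smul_eq_mul]
  have := half_double_sum c hanti k
  rw [this]

lemma fderiv_potential_apply_inr (G : SimpleGraph (Fin N)) (f : Fin N → Fin N → ℝ → ℝ)
    (hsym : ∀ i j, f i j = f j i)
    (hF : ∀ i j, G.Adj i j → ContinuousOn (f i j) (Set.Ioi 0))
    {q : Fin N → ℝ × ℝ} (hq : InConfigSpace G q) (k : Fin N) :
    fderiv ℝ (potential G f) q (basisVec (Sum.inr k))
      = ∑ j, if G.Adj k j then f k j (dist2 (q k) (q j)) * ((q k).2 - (q j).2) else 0 := by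
  rw [(hasFDerivAt_potential G f hF hq).fderiv]
  set c : Fin N → Fin N → ℝ := fun i j =>
    if G.Adj i j then f i j (dist2 (q i) (q j)) * ((q i).2 - (q j).2) else 0 with hcdef
  have hanti : ∀ i j, c i j = - c j i := by
    intro i j
    by_cases hadj : G.Adj i j
    · simp only [hcdef, if_pos hadj, if_pos (hadj.symm)]
      rw [hsym i j, dist2_comm (q i) (q j)]; ring
    · have hadj' : ¬ G.Adj j i := fun h => hadj (h.symm)
      simp [hcdef, hadj, hadj']
  have hc : ∀ i j : Fin N,
      ((if G.Adj i j then
          ((f i j (dist2 (q i) (q j)) * (q i - q j).1) • ContinuousLinearMap.fst ℝ ℝ ℝ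
            + (f i j (dist2 (q i) (q j)) * (q i - q j).2) • ContinuousLinearMap.snd ℝ ℝ ℝ).comp
            (prj i - prj j)
        else 0) : (Fin N → ℝ × ℝ) →L[ℝ] ℝ) (basisVec (Sum.inr k))
      = c i j * ((if i = k then (1:ℝ) else 0) - (if j = k then 1 else 0)) := by
    intro i j
    by_cases hadj : G.Adj i j
    · simp only [hcdef, if_pos hadj, ContinuousLinearMap.comp_apply,
        ContinuousLinearMap.sub_apply, ContinuousLinearMap.add_apply,
        ContinuousLinearMap.smul_apply, ContinuousLinearMap.coe_fst',
        ContinuousLinearMap.coe_snd', prj_apply, basisVec, Sum.elim_inr]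
      by_cases hik : i = k <;> by_cases hjk : j = k <;>
        simp [hik, hjk, Pi.single_apply] <;> ring
    · simp [hcdef, hadj]
  unfold DPhi
  rw [ContinuousLinearMap.smul_apply, ContinuousLinearMap.sum_apply]
  simp_rw [ContinuousLinearMap.sum_apply, hc]
  rw [smul_eq_mul]
  have := half_double_sum c hanti k
  rw [this]


lemma isOpen_config (G : SimpleGraph (Fin N)) :
    IsOpen {q : Fin N → ℝ × ℝ | InConfigSpace G q} := by
  have : {q : Fin N → ℝ × ℝ | InConfigSpace G q}
      = ⋂ i, ⋂ j, {q : Fin N → ℝ × ℝ | G.Adj i j → q i ≠ q j} := by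
    ext q; simp [InConfigSpace, Set.mem_iInter]
  rw [this]
  refine isOpen_iInter_of_finite fun i => isOpen_iInter_of_finite fun j => ?_
  by_cases hadj : G.Adj i j
  · have : {q : Fin N → ℝ × ℝ | G.Adj i j → q i ≠ q j}
        = (fun q : Fin N → ℝ × ℝ => q i - q j) ⁻¹' ({0}ᶜ) := by
      ext q; simp [hadj, sub_eq_zero]
    rw [this]
    exact (isOpen_compl_singleton).preimage ((continuous_apply i).sub (continuous_apply j))
  · have : {q : Fin N → ℝ × ℝ | G.Adj i j → q i ≠ q j} = Set.univ := by
      ext q; simp [hadj]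
    rw [this]; exact isOpen_univ

lemma lineConfig_sub {a : Fin N → ℝ} (i j : Fin N) :
    lineConfig a i - lineConfig a j = ((a i - a j : ℝ), (0:ℝ)) := by
  simp [lineConfig, Prod.ext_iff]

lemma lineConfig_config {G : SimpleGraph (Fin N)} {a : Fin N → ℝ}
    (hP : ∀ i j, G.Adj i j → a i ≠ a j) : InConfigSpace G (lineConfig a) := by
  intro i j hadj
  simp only [lineConfig, ne_eq, Prod.mk.injEq]
  exact fun h => hP i j hadj h.1

lemma hasFDerivAt_colA (G : SimpleGraph (Fin N)) (f : Fin N → Fin N → ℝ → ℝ)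
    (hF : ∀ i j, G.Adj i j → ContDiffOn ℝ 1 (f i j) (Set.Ioi 0))
    {a : Fin N → ℝ} (hP : ∀ i j, G.Adj i j → a i ≠ a j) (k : Fin N) :
    HasFDerivAt (fun q : Fin N → ℝ × ℝ =>
        ∑ j, if G.Adj k j then f k j (dist2 (q k) (q j)) * ((q k).1 - (q j).1) else 0)
      (∑ j, if G.Adj k j then
          (deriv (tildeFn (f k j)) |a k - a j|) •
            ((ContinuousLinearMap.fst ℝ ℝ ℝ).comp (prj k - prj j))
        else 0) (lineConfig a) := by
  refine HasFDerivAt.fun_sum fun j _ => ?_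
  by_cases hadj : G.Adj k j
  · simp only [if_pos hadj]
    have ht : a k - a j ≠ 0 := sub_ne_zero.mpr (hP k j hadj)
    have h1 := key1 (f k j) (hF k j hadj) ht
    have h2 := hasFDerivAt_sub_coords (N := N) k j (lineConfig a)
    rw [show ((a k - a j : ℝ), (0:ℝ)) = lineConfig a k - lineConfig a j
      from (lineConfig_sub k j).symm] at h1
    have hcomp := h1.comp (lineConfig a) h2
    convert hcomp using 2 <;> rfl
  · simp only [if_neg hadj]
    exact hasFDerivAt_const 0 _

lemma hasFDerivAt_colB (G : SimpleGraph (Fin N)) (f : Fin N → Fin N → ℝ → ℝ)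
    (hF : ∀ i j, G.Adj i j → ContDiffOn ℝ 1 (f i j) (Set.Ioi 0))
    {a : Fin N → ℝ} (hP : ∀ i j, G.Adj i j → a i ≠ a j) (k : Fin N) :
    HasFDerivAt (fun q : Fin N → ℝ × ℝ =>
        ∑ j, if G.Adj k j then f k j (dist2 (q k) (q j)) * ((q k).2 - (q j).2) else 0)
      (∑ j, if G.Adj k j then
          (f k j |a k - a j|) •
            ((ContinuousLinearMap.snd ℝ ℝ ℝ).comp (prj k - prj j))
        else 0) (lineConfig a) := by
  refine HasFDerivAt.fun_sum fun j _ => ?_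
  by_cases hadj : G.Adj k j
  · simp only [if_pos hadj]
    have ht : a k - a j ≠ 0 := sub_ne_zero.mpr (hP k j hadj)
    have h1 := key2 (f k j) (hF k j hadj) ht
    have h2 := hasFDerivAt_sub_coords (N := N) k j (lineConfig a)
    rw [show ((a k - a j : ℝ), (0:ℝ)) = lineConfig a k - lineConfig a j
      from (lineConfig_sub k j).symm] at h1
    have hcomp := h1.comp (lineConfig a) h2
    convert hcomp using 2 <;> rfl
  · simp only [if_neg hadj]
    exact hasFDerivAt_const 0 _


lemma hessian_eq (G : SimpleGraph (Fin N)) (f : Fin N → Fin N → ℝ → ℝ)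
    (hsym : ∀ i j, f i j = f j i)
    (hF : ∀ i j, G.Adj i j → ContDiffOn ℝ 1 (f i j) (Set.Ioi 0))
    {a : Fin N → ℝ} (hP : ∀ i j, G.Adj i j → a i ≠ a j) :
    hessian (potential G f) (lineConfig a)
      = -(Matrix.fromBlocks (dFMat G f a) 0 0 (FMat G f a)) := by
  have hq : InConfigSpace G (lineConfig a) := lineConfig_config hP
  have hFc : ∀ i j, G.Adj i j → ContinuousOn (f i j) (Set.Ioi 0) :=
    fun i j hadj => (hF i j hadj).continuousOn
  have hnb : {q : Fin N → ℝ × ℝ | InConfigSpace G q} ∈ 𝓝 (lineConfig a) :=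
    (isOpen_config G).mem_nhds hq
  ext u v
  show fderiv ℝ (fun q => fderiv ℝ (potential G f) q (basisVec v)) (lineConfig a) (basisVec u)
      = _
  cases v with
  | inl k =>
    have hEv : (fun q => fderiv ℝ (potential G f) q (basisVec (Sum.inl k)))
        =ᶠ[𝓝 (lineConfig a)] (fun q : Fin N → ℝ × ℝ =>
          ∑ j, if G.Adj k j then f k j (dist2 (q k) (q j)) * ((q k).1 - (q j).1) else 0) :=
      Filter.eventuallyEq_of_mem hnb fun q hq' =>
        fderiv_potential_apply_inl G f hsym hFc hq' k
    rw [hEv.fderiv_eq, (hasFDerivAt_colA G f hF hP k).fderiv]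
    rw [ContinuousLinearMap.sum_apply]
    cases u with
    | inl i =>
      have hterm : ∀ j : Fin N,
          ((if G.Adj k j then
            (deriv (tildeFn (f k j)) |a k - a j|) •
              ((ContinuousLinearMap.fst ℝ ℝ ℝ).comp (prj k - prj j))
          else 0) : (Fin N → ℝ × ℝ) →L[ℝ] ℝ) (basisVec (Sum.inl i))
          = if G.Adj k j then (deriv (tildeFn (f k j)) |a k - a j|)
              * ((if k = i then (1:ℝ) else 0) - (if j = i then 1 else 0)) else 0 := by
        intro j
        by_cases hadj : G.Adj k j
        · rw [if_pos hadj, if_pos hadj]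
          by_cases hki : k = i <;> by_cases hji : j = i <;>
            simp [basisVec, hki, hji, prj, Pi.single_apply]
        · rw [if_neg hadj, if_neg hadj]; rfl
      rw [Finset.sum_congr rfl fun j _ => hterm j]
      by_cases hik : i = k
      · subst hik
        rw [show (-(Matrix.fromBlocks (dFMat G f a) 0 0 (FMat G f a))) (Sum.inl i) (Sum.inl i)
            = ∑ j, (if G.Adj i j then deriv (tildeFn (f i j)) |a i - a j| else 0) by
          simp [dFMat, FMat]]
        refine Finset.sum_congr rfl fun j _ => ?_
        by_cases hadj : G.Adj i j
        · have hji : j ≠ i := (G.ne_of_adj hadj).symm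
          simp [hadj, hji]
        · simp [hadj]
      · rw [show (-(Matrix.fromBlocks (dFMat G f a) 0 0 (FMat G f a))) (Sum.inl i) (Sum.inl k)
            = -(if G.Adj i k then deriv (tildeFn (f i k)) |a i - a k| else 0) by
          simp [dFMat, FMat, hik]]
        have hterm2 : ∀ j : Fin N,
            (if G.Adj k j then (deriv (tildeFn (f k j)) |a k - a j|)
              * ((if k = i then (1:ℝ) else 0) - (if j = i then 1 else 0)) else 0)
            = if j = i then (if G.Adj k j then -(deriv (tildeFn (f k j)) |a k - a j|) else 0)
              else 0 := by
          intro j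
          have hki : ¬ (k = i) := fun h => hik h.symm
          by_cases hji : j = i <;> by_cases hadj : G.Adj k j <;> simp [hji, hadj, hki]
        rw [Finset.sum_congr rfl fun j _ => hterm2 j, Finset.sum_ite_eq']
        by_cases hadj : G.Adj i k
        · have hadj' : G.Adj k i := hadj.symm
          simp only [Finset.mem_univ, if_true, if_pos hadj, if_pos hadj']
          rw [hsym k i, abs_sub_comm (a k) (a i)]
        · have hadj' : ¬ G.Adj k i := fun h => hadj (h.symm)
          simp [hadj, hadj']
    | inr i =>
      have hterm : ∀ j : Fin N,
          ((if G.Adj k j then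
            (deriv (tildeFn (f k j)) |a k - a j|) •
              ((ContinuousLinearMap.fst ℝ ℝ ℝ).comp (prj k - prj j))
          else 0) : (Fin N → ℝ × ℝ) →L[ℝ] ℝ) (basisVec (Sum.inr i)) = 0 := by
        intro j
        by_cases hadj : G.Adj k j
        · rw [if_pos hadj]
          by_cases hki : k = i <;> by_cases hji : j = i <;>
            simp [basisVec, hki, hji, prj, Pi.single_apply]
        · rw [if_neg hadj]; rfl
      rw [Finset.sum_congr rfl fun j _ => hterm j]
      simp [Matrix.fromBlocks]
  | inr k =>
    have hEv : (fun q => fderiv ℝ (potential G f) q (basisVec (Sum.inr k)))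
        =ᶠ[𝓝 (lineConfig a)] (fun q : Fin N → ℝ × ℝ =>
          ∑ j, if G.Adj k j then f k j (dist2 (q k) (q j)) * ((q k).2 - (q j).2) else 0) :=
      Filter.eventuallyEq_of_mem hnb fun q hq' =>
        fderiv_potential_apply_inr G f hsym hFc hq' k
    rw [hEv.fderiv_eq, (hasFDerivAt_colB G f hF hP k).fderiv]
    rw [ContinuousLinearMap.sum_apply]
    cases u with
    | inl i =>
      have hterm : ∀ j : Fin N,
          ((if G.Adj k j then
            (f k j |a k - a j|) •
              ((ContinuousLinearMap.snd ℝ ℝ ℝ).comp (prj k - prj j))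
          else 0) : (Fin N → ℝ × ℝ) →L[ℝ] ℝ) (basisVec (Sum.inl i)) = 0 := by
        intro j
        by_cases hadj : G.Adj k j
        · rw [if_pos hadj]
          by_cases hki : k = i <;> by_cases hji : j = i <;>
            simp [basisVec, hki, hji, prj, Pi.single_apply]
        · rw [if_neg hadj]; rfl
      rw [Finset.sum_congr rfl fun j _ => hterm j]
      simp [Matrix.fromBlocks]
    | inr i =>
      have hterm : ∀ j : Fin N,
          ((if G.Adj k j then
            (f k j |a k - a j|) •
              ((ContinuousLinearMap.snd ℝ ℝ ℝ).comp (prj k - prj j))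
          else 0) : (Fin N → ℝ × ℝ) →L[ℝ] ℝ) (basisVec (Sum.inr i))
          = if G.Adj k j then (f k j |a k - a j|)
              * ((if k = i then (1:ℝ) else 0) - (if j = i then 1 else 0)) else 0 := by
        intro j
        by_cases hadj : G.Adj k j
        · rw [if_pos hadj, if_pos hadj]
          by_cases hki : k = i <;> by_cases hji : j = i <;>
            simp [basisVec, hki, hji, prj, Pi.single_apply]
        · rw [if_neg hadj, if_neg hadj]; rfl
      rw [Finset.sum_congr rfl fun j _ => hterm j]
      by_cases hik : i = k
      · subst hik
        rw [show (-(Matrix.fromBlocks (dFMat G f a) 0 0 (FMat G f a))) (Sum.inr i) (Sum.inr i)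
            = ∑ j, (if G.Adj i j then f i j |a i - a j| else 0) by
          simp [FMat]]
        refine Finset.sum_congr rfl fun j _ => ?_
        by_cases hadj : G.Adj i j
        · have hji : j ≠ i := (G.ne_of_adj hadj).symm
          simp [hadj, hji]
        · simp [hadj]
      · rw [show (-(Matrix.fromBlocks (dFMat G f a) 0 0 (FMat G f a))) (Sum.inr i) (Sum.inr k)
            = -(if G.Adj i k then f i k |a i - a k| else 0) by
          simp [FMat, hik]]
        have hterm2 : ∀ j : Fin N,
            (if G.Adj k j then (f k j |a k - a j|)
              * ((if k = i then (1:ℝ) else 0) - (if j = i then 1 else 0)) else 0)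
            = if j = i then (if G.Adj k j then -(f k j |a k - a j|) else 0)
              else 0 := by
          intro j
          have hki : ¬ (k = i) := fun h => hik h.symm
          by_cases hji : j = i <;> by_cases hadj : G.Adj k j <;> simp [hji, hadj, hki]
        rw [Finset.sum_congr rfl fun j _ => hterm2 j, Finset.sum_ite_eq']
        by_cases hadj : G.Adj i k
        · have hadj' : G.Adj k i := hadj.symm
          simp only [Finset.mem_univ, if_true, if_pos hadj, if_pos hadj']
          rw [hsym k i, abs_sub_comm (a k) (a i)]
        · have hadj' : ¬ G.Adj k i := fun h => hadj (h.symm)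
          simp [hadj, hadj']


lemma FMat_mulVec_one (G : SimpleGraph (Fin N)) (φ : Fin N → Fin N → ℝ → ℝ) (a : Fin N → ℝ) :
    (FMat G φ a).mulVec (fun _ => (1:ℝ)) = 0 := by
  funext i
  have hdiag : FMat G φ a i i = -∑ k, (if G.Adj i k then φ i k |a i - a k| else 0) := by
    simp [FMat]
  have hoff : ∀ j, j ≠ i → FMat G φ a i j = if G.Adj i j then φ i j |a i - a j| else 0 := by
    intro j hj
    have : ¬ i = j := fun h => hj h.symm
    simp [FMat, if_neg this, this]
  have : (FMat G φ a).mulVec (fun _ => (1:ℝ)) i = ∑ j, FMat G φ a i j := by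
    simp [Matrix.mulVec, dotProduct]
  rw [this, ← Finset.add_sum_erase _ _ (Finset.mem_univ i), hdiag]
  have h2 : ∑ j ∈ Finset.univ.erase i, FMat G φ a i j
      = ∑ j ∈ Finset.univ.erase i, (if G.Adj i j then φ i j |a i - a j| else 0) :=
    Finset.sum_congr rfl fun j hj => hoff j (Finset.mem_erase.mp hj).1
  rw [h2, Finset.sum_erase]
  · simp
  · simp [G.irrefl]

lemma FMat_mulVec_vec (G : SimpleGraph (Fin N)) (φ : Fin N → Fin N → ℝ → ℝ) (a : Fin N → ℝ)
    (x : Fin N → ℝ)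
    (hbal : ∀ i, ∑ j, (if G.Adj i j then φ i j |a i - a j| * (x j - x i) else 0) = 0) :
    (FMat G φ a).mulVec x = 0 := by
  funext i
  have hdiag : FMat G φ a i i = -∑ k, (if G.Adj i k then φ i k |a i - a k| else 0) := by
    simp [FMat]
  have hoff : ∀ j, j ≠ i → FMat G φ a i j = if G.Adj i j then φ i j |a i - a j| else 0 := by
    intro j hj
    have : ¬ i = j := fun h => hj h.symm
    simp [FMat, if_neg this, this]
  have h0 : (FMat G φ a).mulVec x i = ∑ j, FMat G φ a i j * x j := by
    simp [Matrix.mulVec, dotProduct]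
  rw [h0, ← Finset.add_sum_erase _ _ (Finset.mem_univ i), hdiag]
  have h2 : ∑ j ∈ Finset.univ.erase i, FMat G φ a i j * x j
      = ∑ j ∈ Finset.univ.erase i, (if G.Adj i j then φ i j |a i - a j| * x j else 0) := by
    refine Finset.sum_congr rfl fun j hj => ?_
    rw [hoff j (Finset.mem_erase.mp hj).1]
    by_cases hadj : G.Adj i j <;> simp [hadj]
  rw [h2, Finset.sum_erase _ (by simp [G.irrefl])]
  have h3 := hbal i
  have h4 : ∑ j, (if G.Adj i j then φ i j |a i - a j| * (x j - x i) else 0)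
      = ∑ j, ((if G.Adj i j then φ i j |a i - a j| * x j else 0)
          - (if G.Adj i j then φ i j |a i - a j| else 0) * x i) := by
    refine Finset.sum_congr rfl fun j _ => ?_
    by_cases hadj : G.Adj i j <;> simp [hadj] <;> ring
  rw [h4, Finset.sum_sub_distrib, ← Finset.sum_mul] at h3
  have := sub_eq_zero.mp h3
  rw [Pi.zero_apply]
  rw [this]
  ring

lemma FMat_isHermitian (G : SimpleGraph (Fin N)) (φ : Fin N → Fin N → ℝ → ℝ) (a : Fin N → ℝ)
    (hφ : ∀ i j, φ i j = φ j i) : (FMat G φ a).IsHermitian := by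
  rw [Matrix.IsHermitian]
  ext i j
  simp only [Matrix.conjTranspose_apply, star_trivial]
  by_cases hij : i = j
  · subst hij; rfl
  · have hji : ¬ (j = i) := fun h => hij h.symm
    simp only [FMat, Matrix.of_apply, if_neg hij, if_neg hji]
    by_cases hadj : G.Adj i j
    · rw [if_pos hadj, if_pos (hadj.symm), hφ i j, abs_sub_comm]
    · rw [if_neg hadj, if_neg (fun h => hadj (h.symm))]


lemma n0_eq_nullity {m : Type*} [Fintype m] [DecidableEq m] (M : Matrix m m ℝ)
    (hM : M.IsHermitian) :
    n0 M = Module.finrank ℝ (LinearMap.ker M.mulVecLin) := by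
  have hrank : M.rank = Fintype.card {i // hM.eigenvalues i ≠ 0} :=
    hM.rank_eq_card_non_zero_eigs
  have hrn := LinearMap.finrank_range_add_finrank_ker M.mulVecLin
  have hpi : Module.finrank ℝ (m → ℝ) = Fintype.card m := Module.finrank_pi ℝ
  rw [hpi] at hrn
  have hrdef : M.rank = Module.finrank ℝ (LinearMap.range M.mulVecLin) := rfl
  have hsub : Fintype.card {i // hM.eigenvalues i ≠ 0}
      = (Finset.univ.filter fun i => hM.eigenvalues i ≠ 0).card :=
    Fintype.card_subtype _
  have hsplit :
      (Finset.univ.filter fun i => hM.eigenvalues i = 0).card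
        + (Finset.univ.filter fun i => ¬ hM.eigenvalues i = 0).card
      = Fintype.card m := by
    rw [Finset.card_filter_add_card_filter_not]
    exact (Finset.card_univ)
  have hn0 : n0 M = (Finset.univ.filter fun i => hM.eigenvalues i = 0).card := by
    rw [n0, inertia, dif_pos hM]
  have hconv : (Finset.univ.filter fun i => ¬ hM.eigenvalues i = 0).card
      = (Finset.univ.filter fun i => hM.eigenvalues i ≠ 0).card := by congr!
  omega

lemma fromBlocks_diag_mulVec {N : ℕ} (A D : Matrix (Fin N) (Fin N) ℝ)
    (x : Fin N ⊕ Fin N → ℝ) :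
    (Matrix.fromBlocks A 0 0 D).mulVec x
      = Sum.elim (A.mulVec (x ∘ Sum.inl)) (D.mulVec (x ∘ Sum.inr)) := by
  have hx : x = Sum.elim (x ∘ Sum.inl) (x ∘ Sum.inr) := by funext u; cases u <;> rfl
  conv_lhs => rw [hx]
  rw [Matrix.fromBlocks_mulVec]
  simp [Matrix.zero_mulVec]

lemma ker_fromBlocks_iff {N : ℕ} (A D : Matrix (Fin N) (Fin N) ℝ) (x : Fin N ⊕ Fin N → ℝ) :
    (Matrix.fromBlocks A 0 0 D).mulVec x = 0
      ↔ A.mulVec (x ∘ Sum.inl) = 0 ∧ D.mulVec (x ∘ Sum.inr) = 0 := by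
  rw [fromBlocks_diag_mulVec]
  constructor
  · intro h
    constructor <;> funext i
    · simpa using congrFun h (Sum.inl i)
    · simpa using congrFun h (Sum.inr i)
  · rintro ⟨h1, h2⟩
    funext u
    cases u with
    | inl i => simpa using congrFun h1 i
    | inr i => simpa using congrFun h2 i

noncomputable def kerBlocksEquiv {N : ℕ} (A D : Matrix (Fin N) (Fin N) ℝ) :
    (LinearMap.ker (Matrix.fromBlocks A 0 0 D).mulVecLin) ≃ₗ[ℝ]
      (LinearMap.ker A.mulVecLin) × (LinearMap.ker D.mulVecLin) where
  toFun x := (⟨x.1 ∘ Sum.inl, by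
      have := x.2
      rw [LinearMap.mem_ker, Matrix.mulVecLin_apply] at this ⊢
      exact ((ker_fromBlocks_iff A D x.1).mp this).1⟩,
    ⟨x.1 ∘ Sum.inr, by
      have := x.2
      rw [LinearMap.mem_ker, Matrix.mulVecLin_apply] at this ⊢
      exact ((ker_fromBlocks_iff A D x.1).mp this).2⟩)
  map_add' x y := by
    refine Prod.ext (Subtype.ext ?_) (Subtype.ext ?_) <;> rfl
  map_smul' c x := by
    refine Prod.ext (Subtype.ext ?_) (Subtype.ext ?_) <;> rfl
  invFun y := ⟨Sum.elim y.1.1 y.2.1, by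
    rw [LinearMap.mem_ker, Matrix.mulVecLin_apply]
    refine (ker_fromBlocks_iff A D _).mpr ⟨?_, ?_⟩
    · have := y.1.2
      rw [LinearMap.mem_ker, Matrix.mulVecLin_apply] at this
      convert this using 2 <;> rfl
    · have := y.2.2
      rw [LinearMap.mem_ker, Matrix.mulVecLin_apply] at this
      convert this using 2 <;> rfl⟩
  left_inv x := Subtype.ext (by funext u; cases u <;> rfl)
  right_inv y := by
    refine Prod.ext (Subtype.ext ?_) (Subtype.ext ?_) <;> rfl

lemma nullity_fromBlocks {N : ℕ} (A D : Matrix (Fin N) (Fin N) ℝ) :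
    Module.finrank ℝ (LinearMap.ker (Matrix.fromBlocks A 0 0 D).mulVecLin)
      = Module.finrank ℝ (LinearMap.ker A.mulVecLin)
        + Module.finrank ℝ (LinearMap.ker D.mulVecLin) := by
  rw [(kerBlocksEquiv A D).finrank_eq]
  exact Module.finrank_prod

lemma ker_neg_mat {m : Type*} [Fintype m] [DecidableEq m] (M : Matrix m m ℝ) :
    LinearMap.ker (-M).mulVecLin = LinearMap.ker M.mulVecLin := by
  ext x
  rw [LinearMap.mem_ker, LinearMap.mem_ker, Matrix.mulVecLin_apply, Matrix.mulVecLin_apply,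
    Matrix.neg_mulVec, neg_eq_zero]


lemma one_ne_zero_vec (hN : 0 < N) : (fun _ : Fin N => (1:ℝ)) ≠ 0 := by
  intro h
  have := congrFun h ⟨0, hN⟩
  norm_num at this

lemma finrank_eq_one_iff_span (K : Submodule ℝ (Fin N → ℝ)) (hN : 0 < N)
    (hone : (fun _ : Fin N => (1:ℝ)) ∈ K) :
    1 ≤ Module.finrank ℝ K ∧
      (Module.finrank ℝ K = 1 ↔ ∀ x ∈ K, ∃ c : ℝ, x = fun _ => c) := by
  have hle : Submodule.span ℝ {fun _ : Fin N => (1:ℝ)} ≤ K := by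
    rw [Submodule.span_le]; simpa using hone
  have hsp : Module.finrank ℝ (Submodule.span ℝ {fun _ : Fin N => (1:ℝ)}) = 1 :=
    finrank_span_singleton (one_ne_zero_vec hN)
  refine ⟨hsp ▸ Submodule.finrank_mono hle, ?_⟩
  constructor
  · intro hfr x hx
    have heq : Submodule.span ℝ {fun _ : Fin N => (1:ℝ)} = K :=
      Submodule.eq_of_le_of_finrank_eq hle (by rw [hsp, hfr])
    rw [← heq] at hx
    obtain ⟨c, hc⟩ := Submodule.mem_span_singleton.mp hx
    exact ⟨c, by rw [← hc]; funext i; simp⟩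
  · intro hcond
    have hKle : K ≤ Submodule.span ℝ {fun _ : Fin N => (1:ℝ)} := by
      intro x hx
      obtain ⟨c, rfl⟩ := hcond x hx
      exact Submodule.mem_span_singleton.mpr ⟨c, by funext i; simp⟩
    rw [le_antisymm hKle hle]
    exact hsp

lemma finrank_eq_two_iff_span (K : Submodule ℝ (Fin N → ℝ)) (a : Fin N → ℝ)
    {i0 j0 : Fin N} (hne : a i0 ≠ a j0)
    (hone : (fun _ : Fin N => (1:ℝ)) ∈ K) (ha : a ∈ K) :
    2 ≤ Module.finrank ℝ K ∧
      (Module.finrank ℝ K = 2 ↔ ∀ x ∈ K, ∃ c e : ℝ, x = fun i => c + e * a i) := by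
  set one : Fin N → ℝ := fun _ => (1:ℝ) with hone_def
  have hli : LinearIndependent ℝ ![one, a] := by
    rw [LinearIndependent.pair_iff]
    intro s t hst
    have h1 : s + t * a i0 = 0 := by
      have := congrFun hst i0; simpa [hone_def] using this
    have h2 : s + t * a j0 = 0 := by
      have := congrFun hst j0; simpa [hone_def] using this
    have h3 : t * (a i0 - a j0) = 0 := by ring_nf; ring_nf at h1 h2; linarith
    have ht : t = 0 := by
      rcases mul_eq_zero.mp h3 with h | h
      · exact h
      · exact absurd (sub_eq_zero.mp h) hne
    constructor
    · rw [ht] at h1; simpa using h1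
    · exact ht
  have hrange : Set.range ![one, a] = {one, a} := by
    ext x
    constructor
    · rintro ⟨i, rfl⟩
      fin_cases i <;> simp
    · rintro (rfl | rfl)
      · exact ⟨0, rfl⟩
      · exact ⟨1, rfl⟩
  have hsp2 : Module.finrank ℝ (Submodule.span ℝ ({one, a} : Set (Fin N → ℝ))) = 2 := by
    rw [← hrange, finrank_span_eq_card hli]
    simp
  have hle : Submodule.span ℝ ({one, a} : Set (Fin N → ℝ)) ≤ K := by
    rw [Submodule.span_le, Set.insert_subset_iff]
    exact ⟨hone, by simpa using ha⟩
  refine ⟨hsp2 ▸ Submodule.finrank_mono hle, ?_⟩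
  constructor
  · intro hfr x hx
    have heq : Submodule.span ℝ ({one, a} : Set (Fin N → ℝ)) = K :=
      Submodule.eq_of_le_of_finrank_eq hle (by rw [hsp2, hfr])
    rw [← heq] at hx
    obtain ⟨c, e, hc⟩ := Submodule.mem_span_pair.mp hx
    refine ⟨c, e, ?_⟩
    rw [← hc]; funext i; simp [hone_def]
  · intro hcond
    have hKle : K ≤ Submodule.span ℝ ({one, a} : Set (Fin N → ℝ)) := by
      intro x hx
      obtain ⟨c, e, rfl⟩ := hcond x hx
      exact Submodule.mem_span_pair.mpr ⟨c, e, by funext i; simp [hone_def]⟩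
    rw [le_antisymm hKle hle]
    exact hsp2


lemma sum_fst {ι : Type*} (s : Finset ι) (v : ι → ℝ × ℝ) :
    (∑ j ∈ s, v j).1 = ∑ j ∈ s, (v j).1 :=
  map_sum (AddMonoidHom.fst ℝ ℝ) v s

lemma dist2_line (a : Fin N → ℝ) (i j : Fin N) :
    dist2 (lineConfig a i) (lineConfig a j) = |a i - a j| := by
  show Real.sqrt ((a i - a j)^2 + (0 - 0:ℝ)^2) = _
  rw [show (a i - a j)^2 + (0 - 0:ℝ)^2 = (a i - a j)^2 by ring, Real.sqrt_sq_eq_abs]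

end S17aux


/-- at a line configuration `p` on the `a`-axis, the Hessian of `Φ` in the
coordinates `(a₁,…,a_N,b₁,…,b_N)` equals `−diag(d̃F_p, F_p)`; if `p` is an equilibrium then
`t_a = (e,0)`, `t_b = (0,e)`, `r_p = (0,a)` lie in its kernel, so it has at least three zero
eigenvalues, and the critical orbit is nondegenerate (exactly three zero eigenvalues) iff
`ker d̃F_p = span{e}` and `ker F_p = span{e, a}`. -/
theorem statement17 {N : ℕ} (G : SimpleGraph (Fin N)) (hedge : ∃ i j, G.Adj i j)
    (f : Fin N → Fin N → ℝ → ℝ)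
    (hsym : ∀ i j, f i j = f j i)
    (hF : ∀ i j, G.Adj i j → MemF (f i j))
    (a : Fin N → ℝ)
    (hP : ∀ i j, G.Adj i j → a i ≠ a j) :
    hessian (potential G f) (lineConfig a)
        = -(Matrix.fromBlocks (dFMat G f a) 0 0 (FMat G f a)) ∧
    (IsEquilibrium G f (lineConfig a) →
      (hessian (potential G f) (lineConfig a)).mulVec
          (Sum.elim (fun _ => (1:ℝ)) (fun _ => 0)) = 0 ∧
      (hessian (potential G f) (lineConfig a)).mulVec
          (Sum.elim (fun _ => (0:ℝ)) (fun _ => 1)) = 0 ∧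
      (hessian (potential G f) (lineConfig a)).mulVec
          (Sum.elim (fun _ => (0:ℝ)) (fun i => a i)) = 0 ∧
      3 ≤ n0 (hessian (potential G f) (lineConfig a)) ∧
      (n0 (hessian (potential G f) (lineConfig a)) = 3 ↔
        ((∀ x : Fin N → ℝ, (dFMat G f a).mulVec x = 0 → ∃ c : ℝ, x = fun _ => c) ∧
         (∀ x : Fin N → ℝ, (FMat G f a).mulVec x = 0 →
            ∃ c e : ℝ, x = fun i => c + e * a i)))) := by
  have hCD : ∀ i j, G.Adj i j → ContDiffOn ℝ 1 (f i j) (Set.Ioi 0) :=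
    fun i j h => (hF i j h).1
  have hHeq : hessian (potential G f) (lineConfig a)
      = -(Matrix.fromBlocks (dFMat G f a) 0 0 (FMat G f a)) :=
    S17aux.hessian_eq G f hsym hCD hP
  refine ⟨hHeq, fun hEq => ?_⟩
  obtain ⟨i0, j0, hadj0⟩ := hedge
  have hN : 0 < N := i0.pos
  have hone_d : (dFMat G f a).mulVec (fun _ => (1:ℝ)) = 0 := S17aux.FMat_mulVec_one G _ a
  have hone_f : (FMat G f a).mulVec (fun _ => (1:ℝ)) = 0 := S17aux.FMat_mulVec_one G f a
  have hbal : ∀ i, ∑ j, (if G.Adj i j then f i j |a i - a j| * (a j - a i) else 0) = 0 := by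
    intro i
    have h1 : ∑ j, ((if G.Adj i j then
        (f i j (dist2 (lineConfig a i) (lineConfig a j))) • (lineConfig a j - lineConfig a i)
        else (0:ℝ×ℝ))).1 = 0 := by
      rw [← S17aux.sum_fst, hEq i]; simp
    refine Eq.trans (Finset.sum_congr rfl fun j _ => ?_) h1
    by_cases hadj : G.Adj i j
    · simp only [if_pos hadj]
      rw [S17aux.dist2_line a i j]
      simp [lineConfig]
    · simp [hadj]
  have ha_f : (FMat G f a).mulVec a = 0 := S17aux.FMat_mulVec_vec G f a a hbal
  have hmv : ∀ x y : Fin N → ℝ,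
      (hessian (potential G f) (lineConfig a)).mulVec (Sum.elim x y)
        = Sum.elim (-((dFMat G f a).mulVec x)) (-((FMat G f a).mulVec y)) := by
    intro x y
    rw [hHeq, Matrix.neg_mulVec, S17aux.fromBlocks_diag_mulVec]
    funext u
    cases u with
    | inl i => simp
    | inr i => simp
  have hz_d : (dFMat G f a).mulVec (fun _ => (0:ℝ)) = 0 := Matrix.mulVec_zero _
  have hz_f : (FMat G f a).mulVec (fun _ => (0:ℝ)) = 0 := Matrix.mulVec_zero _
  refine ⟨?_, ?_, ?_, ?_⟩
  · rw [hmv, hone_d, hz_f]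
    funext u; cases u <;> simp
  · rw [hmv, hz_d, hone_f]
    funext u; cases u <;> simp
  · rw [show (Sum.elim (fun _ => (0:ℝ)) (fun i => a i) : Fin N ⊕ Fin N → ℝ)
        = Sum.elim (fun _ => (0:ℝ)) a from rfl, hmv, hz_d, ha_f]
    funext u; cases u <;> simp
  -- eigenvalue counting
  have hdFh : (dFMat G f a).IsHermitian :=
    S17aux.FMat_isHermitian G _ a (fun i j => by rw [hsym])
  have hFh : (FMat G f a).IsHermitian := S17aux.FMat_isHermitian G f a hsym
  have hBh : (Matrix.fromBlocks (dFMat G f a) 0 0 (FMat G f a)).IsHermitian := by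
    rw [Matrix.IsHermitian, Matrix.fromBlocks_conjTranspose, Matrix.conjTranspose_zero,
      hdFh.eq, hFh.eq]
  have hHh : (hessian (potential G f) (lineConfig a)).IsHermitian := by
    rw [hHeq]; exact hBh.neg
  have hn0 : n0 (hessian (potential G f) (lineConfig a))
      = Module.finrank ℝ (LinearMap.ker (dFMat G f a).mulVecLin)
        + Module.finrank ℝ (LinearMap.ker (FMat G f a).mulVecLin) := by
    rw [S17aux.n0_eq_nullity _ hHh, hHeq, S17aux.ker_neg_mat, S17aux.nullity_fromBlocks]
  have honeK_d : (fun _ : Fin N => (1:ℝ)) ∈ LinearMap.ker (dFMat G f a).mulVecLin := by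
    rw [LinearMap.mem_ker, Matrix.mulVecLin_apply]; exact hone_d
  have honeK_f : (fun _ : Fin N => (1:ℝ)) ∈ LinearMap.ker (FMat G f a).mulVecLin := by
    rw [LinearMap.mem_ker, Matrix.mulVecLin_apply]; exact hone_f
  have haK_f : a ∈ LinearMap.ker (FMat G f a).mulVecLin := by
    rw [LinearMap.mem_ker, Matrix.mulVecLin_apply]; exact ha_f
  obtain ⟨hge1, hiff1⟩ :=
    S17aux.finrank_eq_one_iff_span (LinearMap.ker (dFMat G f a).mulVecLin) hN honeK_d
  obtain ⟨hge2, hiff2⟩ :=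
    S17aux.finrank_eq_two_iff_span (LinearMap.ker (FMat G f a).mulVecLin) a
      (hP i0 j0 hadj0) honeK_f haK_f
  refine ⟨by omega, ?_⟩
  constructor
  · intro h3
    have hnd : Module.finrank ℝ (LinearMap.ker (dFMat G f a).mulVecLin) = 1 := by omega
    have hnf : Module.finrank ℝ (LinearMap.ker (FMat G f a).mulVecLin) = 2 := by omega
    refine ⟨fun x hx => hiff1.mp hnd x ?_, fun x hx => hiff2.mp hnf x ?_⟩
    · rw [LinearMap.mem_ker, Matrix.mulVecLin_apply]; exact hx
    · rw [LinearMap.mem_ker, Matrix.mulVecLin_apply]; exact hx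
  · rintro ⟨h1, h2⟩
    have hnd : Module.finrank ℝ (LinearMap.ker (dFMat G f a).mulVecLin) = 1 :=
      hiff1.mpr fun x hx => h1 x (by rwa [LinearMap.mem_ker, Matrix.mulVecLin_apply] at hx)
    have hnf : Module.finrank ℝ (LinearMap.ker (FMat G f a).mulVecLin) = 2 :=
      hiff2.mpr fun x hx => h2 x (by rwa [LinearMap.mem_ker, Matrix.mulVecLin_apply] at hx)
    omega
end

section
/- 𝓕 is an open subset of C¹(ℝ₊,ℝ) with respect to the Whitney C¹-topology. -/
open Set Filter Topology MeasureTheory Matrix Function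

attribute [local instance] Classical.propDecidable

lemma deriv_tildeFn_eq (u : ℝ → ℝ) (hu : ContDiffOn ℝ 1 u (Set.Ioi 0)) {d : ℝ} (hd : 0 < d) :
    deriv (tildeFn u) d = u d + d * deriv u d := by
  have hdiff : DifferentiableAt ℝ u d :=
    (hu.differentiableOn one_ne_zero).differentiableAt (Ioi_mem_nhds hd)
  have h : HasDerivAt (fun y : ℝ => y * u y) (1 * u d + d * deriv u d) d :=
    (hasDerivAt_id d).mul hdiff.hasDerivAt
  have := h.deriv
  simpa [show tildeFn u = fun y => y * u y from rfl] using this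

lemma continuousOn_tildeFn (u : ℝ → ℝ) (hu : ContDiffOn ℝ 1 u (Set.Ioi 0)) :
    ContinuousOn (tildeFn u) (Set.Ioi 0) := by
  have h : ContinuousOn (fun d : ℝ => d * u d) (Set.Ioi 0) :=
    continuous_id.continuousOn.mul hu.continuousOn
  exact h

/-- `𝓕` is an open subset of `C¹(ℝ₊,ℝ)` in the Whitney `C¹`-topology. -/
theorem statement18 : IsOpen {f : C1Pos | MemF f.1} := by
  rw [isOpen_iff_forall_mem_open]
  intro f hf
  obtain ⟨hC1, hderivpos, ⟨d0, hd0pos, hd0zero⟩, htend⟩ := hf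
  have hTcont : ContinuousOn (tildeFn f.1) (Set.Ioi 0) := continuousOn_tildeFn f.1 f.2
  have hTmono : StrictMonoOn (tildeFn f.1) (Set.Ioi 0) := by
    apply strictMonoOn_of_deriv_pos (convex_Ioi 0) hTcont
    intro x hx
    rw [interior_Ioi] at hx
    exact hderivpos x hx
  set d₁ : ℝ := d0 / 2 with hd₁def
  set d₂ : ℝ := d0 + 1 with hd₂def
  have hd₁pos : 0 < d₁ := by positivity
  have hd₂pos : 0 < d₂ := by positivity
  have hd₁lt : d₁ < d0 := by rw [hd₁def]; linarith
  have hd₂gt : d0 < d₂ := by rw [hd₂def]; linarith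
  have hT1 : tildeFn f.1 d₁ < 0 := by
    have := hTmono hd₁pos hd0pos hd₁lt
    rw [hd0zero] at this; exact this
  have hT2 : 0 < tildeFn f.1 d₂ := by
    have := hTmono hd0pos hd₂pos hd₂gt
    rw [hd0zero] at this; exact this
  set c₁ : ℝ := -tildeFn f.1 d₁ with hc₁def
  set c₂ : ℝ := tildeFn f.1 d₂ with hc₂def
  have hc₁pos : 0 < c₁ := by rw [hc₁def]; linarith
  have hc₂pos : 0 < c₂ := hT2
  set m : ℝ := min (c₁ / d₁) (c₂ / d₂) with hmdef
  have hmpos : 0 < m := lt_min (by positivity) (by positivity)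
  set δ : ℝ → ℝ := fun d => min (deriv (tildeFn f.1) d / (2 * (1 + d))) (min 1 m) with hδdef
  have hTC1 : ContDiffOn ℝ 1 (tildeFn f.1) (Set.Ioi 0) := by
    have h : ContDiffOn ℝ 1 (fun d : ℝ => d * f.1 d) (Set.Ioi 0) := contDiffOn_id.mul f.2
    exact h
  have hderivTcont : ContinuousOn (deriv (tildeFn f.1)) (Set.Ioi 0) :=
    hTC1.continuousOn_deriv_of_isOpen isOpen_Ioi le_rfl
  have hδcont : ContinuousOn δ (Set.Ioi 0) := by
    apply ContinuousOn.inf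
    · refine hderivTcont.div
        ((continuous_const.mul (continuous_const.add continuous_id)).continuousOn) ?_
      intro x hx
      have h0 : (0:ℝ) < x := hx
      have : (0:ℝ) < 2 * (1 + x) := by linarith
      exact ne_of_gt this
    · exact continuousOn_const
  have hδpos : ∀ d > (0:ℝ), 0 < δ d := by
    intro d hd
    exact lt_min (div_pos (hderivpos d hd) (by linarith)) (lt_min one_pos hmpos)
  -- the basic open set
  refine ⟨{ g : C1Pos | ∀ d > (0:ℝ), |g.1 d - f.1 d| + |deriv g.1 d - deriv f.1 d| < δ d },
    ?_, ?_, ?_⟩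
  · -- subset of MemF
    intro g hg
    simp only [Set.mem_setOf_eq] at hg ⊢
    refine ⟨g.2, ?_, ?_, ?_⟩
    · -- derivative of tildeFn g positive
      intro d hd
      have hgd := hg d hd
      rw [deriv_tildeFn_eq g.1 g.2 hd]
      have hFeq : deriv (tildeFn f.1) d = f.1 d + d * deriv f.1 d := deriv_tildeFn_eq f.1 f.2 hd
      have hA : 0 < deriv (tildeFn f.1) d := hderivpos d hd
      have hδ1 : δ d ≤ deriv (tildeFn f.1) d / (2 * (1 + d)) := min_le_left _ _
      have h1d : (0:ℝ) < 1 + d := by linarith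
      have hdd : (1 + d) * δ d ≤ deriv (tildeFn f.1) d / 2 := by
        have h := mul_le_mul_of_nonneg_left hδ1 h1d.le
        have he : (1 + d) * (deriv (tildeFn f.1) d / (2 * (1 + d)))
            = deriv (tildeFn f.1) d / 2 := by
          field_simp
        rw [he] at h
        exact h
      have hb : (1 + d) * (|g.1 d - f.1 d| + |deriv g.1 d - deriv f.1 d|) < (1 + d) * δ d :=
        mul_lt_mul_of_pos_left hgd h1d
      have e1 : f.1 d - g.1 d ≤ |g.1 d - f.1 d| := by
        rw [abs_sub_comm]; exact le_abs_self _
      have e2 : deriv f.1 d - deriv g.1 d ≤ |deriv g.1 d - deriv f.1 d| := by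
        rw [abs_sub_comm]; exact le_abs_self _
      have h5 : d * (deriv f.1 d - deriv g.1 d) ≤ d * |deriv g.1 d - deriv f.1 d| :=
        mul_le_mul_of_nonneg_left e2 hd.le
      have h6 : (0:ℝ) ≤ d * |g.1 d - f.1 d| := mul_nonneg hd.le (abs_nonneg _)
      have ha2 : (0:ℝ) ≤ |deriv g.1 d - deriv f.1 d| := abs_nonneg _
      nlinarith [hb, hdd, e1, h5, h6, ha2, hFeq, hA]
    · -- zero of tildeFn g
      have hsub : Set.Icc d₁ d₂ ⊆ Set.Ioi 0 := fun x hx => lt_of_lt_of_le hd₁pos hx.1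
      have hgcont : ContinuousOn (tildeFn g.1) (Set.Icc d₁ d₂) :=
        (continuousOn_tildeFn g.1 g.2).mono hsub
      have hneg : tildeFn g.1 d₁ < 0 := by
        have hgd := hg d₁ hd₁pos
        have hlt : |g.1 d₁ - f.1 d₁| < δ d₁ :=
          lt_of_le_of_lt (le_add_of_nonneg_right (abs_nonneg _)) hgd
        have heq : tildeFn g.1 d₁ - tildeFn f.1 d₁ = d₁ * (g.1 d₁ - f.1 d₁) := by
          simp only [tildeFn]; ring
        have hδm : δ d₁ ≤ c₁ / d₁ := le_trans (min_le_right _ _)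
          (le_trans (min_le_right _ _) (min_le_left _ _))
        have hdm : d₁ * δ d₁ ≤ c₁ := by
          rw [mul_comm, ← le_div_iff₀ hd₁pos]; exact hδm
        have hlt2 : tildeFn g.1 d₁ - tildeFn f.1 d₁ < d₁ * δ d₁ := by
          rw [heq]
          calc d₁ * (g.1 d₁ - f.1 d₁) ≤ d₁ * |g.1 d₁ - f.1 d₁| :=
                mul_le_mul_of_nonneg_left (le_abs_self _) hd₁pos.le
            _ < d₁ * δ d₁ := mul_lt_mul_of_pos_left hlt hd₁pos
        have hcc : c₁ = -tildeFn f.1 d₁ := hc₁def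
        linarith
      have hpos2 : 0 < tildeFn g.1 d₂ := by
        have hgd := hg d₂ hd₂pos
        have hlt : |g.1 d₂ - f.1 d₂| < δ d₂ :=
          lt_of_le_of_lt (le_add_of_nonneg_right (abs_nonneg _)) hgd
        have heq : tildeFn f.1 d₂ - tildeFn g.1 d₂ = d₂ * (f.1 d₂ - g.1 d₂) := by
          simp only [tildeFn]; ring
        have hδm : δ d₂ ≤ c₂ / d₂ := le_trans (min_le_right _ _)
          (le_trans (min_le_right _ _) (min_le_right _ _))
        have hdm : d₂ * δ d₂ ≤ c₂ := by
          rw [mul_comm, ← le_div_iff₀ hd₂pos]; exact hδm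
        have habs : f.1 d₂ - g.1 d₂ ≤ |g.1 d₂ - f.1 d₂| := by
          rw [abs_sub_comm]; exact le_abs_self _
        have hlt2 : tildeFn f.1 d₂ - tildeFn g.1 d₂ < d₂ * δ d₂ := by
          rw [heq]
          calc d₂ * (f.1 d₂ - g.1 d₂) ≤ d₂ * |g.1 d₂ - f.1 d₂| :=
                mul_le_mul_of_nonneg_left habs hd₂pos.le
            _ < d₂ * δ d₂ := mul_lt_mul_of_pos_left hlt hd₂pos
        have hcc : c₂ = tildeFn f.1 d₂ := hc₂def
        linarith
      have hle : d₁ ≤ d₂ := by linarith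
      obtain ⟨t, htmem, ht0⟩ := intermediate_value_Icc hle hgcont ⟨hneg.le, hpos2.le⟩
      exact ⟨t, lt_of_lt_of_le hd₁pos htmem.1, ht0⟩
    · -- integral tendsto atBot
      have key : ∀ d ∈ Set.Ioo (0:ℝ) 1,
          (∫ x in d..(1:ℝ), tildeFn g.1 x) ≤ (∫ x in d..(1:ℝ), tildeFn f.1 x) + 1 := by
        intro d hd
        have hsub : Set.uIcc d 1 ⊆ Set.Ioi 0 := by
          rw [Set.uIcc_of_le hd.2.le]
          exact fun x hx => lt_of_lt_of_le hd.1 hx.1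
        have hgint : IntervalIntegrable (tildeFn g.1) volume d 1 :=
          ((continuousOn_tildeFn g.1 g.2).mono hsub).intervalIntegrable
        have hTint : IntervalIntegrable (tildeFn f.1) volume d 1 :=
          (hTcont.mono hsub).intervalIntegrable
        have hsubeq : (∫ x in d..(1:ℝ), tildeFn g.1 x) - (∫ x in d..(1:ℝ), tildeFn f.1 x)
            = ∫ x in d..(1:ℝ), (tildeFn g.1 x - tildeFn f.1 x) :=
          (intervalIntegral.integral_sub hgint hTint).symm
        have hbound : ∀ x ∈ Set.Icc d 1, tildeFn g.1 x - tildeFn f.1 x ≤ 1 := by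
          intro x hx
          have hx0 : 0 < x := lt_of_lt_of_le hd.1 hx.1
          have hgx := hg x hx0
          have hlt : |g.1 x - f.1 x| < δ x :=
            lt_of_le_of_lt (le_add_of_nonneg_right (abs_nonneg _)) hgx
          have hδle1 : δ x ≤ 1 := le_trans (min_le_right _ _) (min_le_left _ _)
          have heq : tildeFn g.1 x - tildeFn f.1 x = x * (g.1 x - f.1 x) := by
            simp only [tildeFn]; ring
          rw [heq]
          calc x * (g.1 x - f.1 x) ≤ x * |g.1 x - f.1 x| :=
                mul_le_mul_of_nonneg_left (le_abs_self _) hx0.le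
            _ ≤ 1 * 1 := mul_le_mul hx.2 (le_trans hlt.le hδle1) (abs_nonneg _) zero_le_one
            _ = 1 := one_mul 1
        have hmono : (∫ x in d..(1:ℝ), (tildeFn g.1 x - tildeFn f.1 x))
            ≤ ∫ _x in d..(1:ℝ), (1:ℝ) :=
          intervalIntegral.integral_mono_on hd.2.le (hgint.sub hTint)
            intervalIntegrable_const hbound
        have hconst : (∫ _x in d..(1:ℝ), (1:ℝ)) = 1 - d := by simp
        rw [hconst] at hmono
        have h01 : (0:ℝ) < d := hd.1
        linarith [hsubeq, hmono]
      have htend' : Tendsto (fun d => (∫ x in d..(1:ℝ), tildeFn f.1 x) + 1)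
          (𝓝[>] (0:ℝ)) atBot :=
        tendsto_atBot_add_const_right _ 1 htend
      refine tendsto_atBot_mono' _ ?_ htend'
      filter_upwards [Ioo_mem_nhdsGT_of_mem (Set.mem_Ico.mpr ⟨le_refl (0:ℝ), one_pos⟩)] with d hd
      exact key d hd
  · -- the set is open
    exact TopologicalSpace.isOpen_generateFrom_of_mem ⟨f, δ, hδcont, hδpos, rfl⟩
  · -- f is in the set
    intro d hd
    simpa using hδpos d hd
end
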